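/- arXiv:1402.1869 — 6 statements merged into one kernel-verified Lean document; each statement's English description precedes it below -/
import Mathlib

section
/- Let h̃ : ℝ → ℝ be defined by h̃(x) = max{0, x} + Σ_{i=1}^{p-1} (-1)^i · 2 · max{0, x - i}. Then for every k ∈ {1, ..., p} and every x ∈ [k-1, k], h̃(x) = x - (k-1) if k is odd, and h̃(x) = k - x if k is even. In particular h̃ maps each interval [k-1, k] bijectively onto [0, 1]. -/
/-- The sawtooth function built from rectifier (ReLU) units:
`h̃(x) = max{0,x} + ∑_{i=1}^{p-1} (-1)^i · 2 · max{0, x - i}`. -/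
noncomputable def sawtooth (p : ℕ) (x : ℝ) : ℝ :=
  max 0 x + ∑ i ∈ Finset.Icc 1 (p - 1), (-1 : ℝ) ^ i * 2 * max 0 (x - i)

lemma sawtooth_sum_closed (m : ℕ) (x : ℝ) :
    x + ∑ i ∈ Finset.Icc 1 m, (-1 : ℝ) ^ i * 2 * (x - i) =
      if Even m then x - m else (m + 1 : ℝ) - x := by
  induction m with
  | zero => simp
  | succ n ih =>
    rw [Finset.sum_Icc_succ_top (by omega : 1 ≤ n + 1), ← add_assoc, ih]
    by_cases h : Even n
    · have h1 : Odd (n + 1) := Even.add_one h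
      rw [if_pos h, if_neg (by simpa using h1), h1.neg_one_pow]
      push_cast
      ring
    · have h1 : Even (n + 1) := Odd.add_one (Nat.not_even_iff_odd.mp h)
      rw [if_neg h, if_pos h1, h1.neg_one_pow]
      push_cast
      ring

theorem sawtooth_piece (p : ℕ) (hp : 1 ≤ p) (k : ℕ) (hk : 1 ≤ k) (hkp : k ≤ p) :
    (∀ x ∈ Set.Icc ((k : ℝ) - 1) (k : ℝ),
      sawtooth p x = if Odd k then x - ((k : ℝ) - 1) else (k : ℝ) - x) ∧
    Set.BijOn (sawtooth p) (Set.Icc ((k : ℝ) - 1) (k : ℝ)) (Set.Icc (0 : ℝ) 1) := by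
  have hm : ((k - 1 : ℕ) : ℝ) = (k : ℝ) - 1 := by
    push_cast [Nat.cast_sub hk]; ring
  have key : ∀ x ∈ Set.Icc ((k : ℝ) - 1) (k : ℝ),
      sawtooth p x = if Odd k then x - ((k : ℝ) - 1) else (k : ℝ) - x := by
    rintro x ⟨hx1, hx2⟩
    have hk1 : (1 : ℝ) ≤ (k : ℝ) := by exact_mod_cast hk
    have hx0 : 0 ≤ x := le_trans (by linarith) hx1
    unfold sawtooth
    rw [max_eq_right hx0]
    have hsub : Finset.Icc 1 (k - 1) ⊆ Finset.Icc 1 (p - 1) :=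
      Finset.Icc_subset_Icc_right (by omega)
    rw [← Finset.sum_subset hsub ?_]
    · have hcongr : ∑ i ∈ Finset.Icc 1 (k - 1), (-1 : ℝ) ^ i * 2 * max 0 (x - i) =
          ∑ i ∈ Finset.Icc 1 (k - 1), (-1 : ℝ) ^ i * 2 * (x - i) := by
        apply Finset.sum_congr rfl
        intro i hi
        rw [Finset.mem_Icc] at hi
        have : (i : ℝ) ≤ (k : ℝ) - 1 := by
          rw [← hm]; exact_mod_cast hi.2
        rw [max_eq_right (by linarith)]
      rw [hcongr, sawtooth_sum_closed, hm]
      have hpar : Even (k - 1) ↔ Odd k := by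
        simp only [Nat.even_iff, Nat.odd_iff] at *
        omega
      by_cases ho : Odd k
      · rw [if_pos (hpar.mpr ho), if_pos ho]
      · rw [if_neg (fun h => ho (hpar.mp h)), if_neg ho]
        ring
    · intro i hi hni
      rw [Finset.mem_Icc] at hi
      rw [Finset.mem_Icc] at hni
      have hki : k ≤ i := by omega
      have : x - i ≤ 0 := by
        have : (k : ℝ) ≤ (i : ℝ) := by exact_mod_cast hki
        linarith
      rw [max_eq_left this, mul_zero]
  refine ⟨key, ?_⟩
  by_cases ho : Odd k
  · have hbij : Set.BijOn (fun x : ℝ => x - ((k : ℝ) - 1))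
        (Set.Icc ((k : ℝ) - 1) (k : ℝ)) (Set.Icc (0 : ℝ) 1) := by
      refine ⟨?_, ?_, ?_⟩
      · rintro x ⟨h1, h2⟩; dsimp; exact ⟨by linarith, by linarith⟩
      · rintro a _ b _ h; dsimp at h; linarith
      · rintro y ⟨h1, h2⟩
        exact ⟨y + ((k : ℝ) - 1), ⟨by linarith, by linarith⟩, by ring⟩
    exact hbij.congr fun x hx => by rw [key x hx, if_pos ho]
  · have hbij : Set.BijOn (fun x : ℝ => (k : ℝ) - x)
        (Set.Icc ((k : ℝ) - 1) (k : ℝ)) (Set.Icc (0 : ℝ) 1) := by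
      refine ⟨?_, ?_, ?_⟩
      · rintro x ⟨h1, h2⟩; dsimp; exact ⟨by linarith, by linarith⟩
      · rintro a _ b _ h; dsimp at h; linarith
      · rintro y ⟨h1, h2⟩
        exact ⟨(k : ℝ) - y, ⟨by linarith, by linarith⟩, by ring⟩
    exact hbij.congr fun x hx => by rw [key x hx, if_neg ho]
end

section
/- The sawtooth function h̃ : ℝ → ℝ given by h̃(x) = max{0, x} + Σ_{i=1}^{p-1} (-1)^i · 2 · max{0, x - i} identifies the p intervals (0,1), (1,2), ..., (p-1,p): the image of each open interval (k-1, k) under h̃ equals the open interval (0, 1), for every k ∈ {1, ..., p}. -/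
lemma saw_sum_formula (m : ℕ) (x : ℝ) :
    ∑ i ∈ Finset.Icc 1 m, (-1 : ℝ) ^ i * 2 * (x - i) =
      if Even m then -(m : ℝ) else -2 * x + (m + 1) := by
  induction m with
  | zero => simp
  | succ n ih =>
    rw [Finset.sum_Icc_succ_top (Nat.le_add_left 1 n), ih]
    rcases Nat.even_or_odd n with h | h
    · simp [h, Nat.not_even_iff_odd.mpr (Even.add_one h), h.neg_one_pow]
      push_cast; ring
    · simp [Nat.not_even_iff_odd.mpr h, Odd.add_one h, Odd.neg_one_pow h]
      push_cast; ring

lemma sawtooth_on (p k : ℕ) (hk : 1 ≤ k) (hkp : k ≤ p) (x : ℝ)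
    (hx : x ∈ Set.Ioo ((k : ℝ) - 1) (k : ℝ)) :
    sawtooth p x = if Even (k - 1) then x - ((k : ℝ) - 1) else (k : ℝ) - x := by
  obtain ⟨hx1, hx2⟩ := hx
  have hk1 : (1 : ℝ) ≤ (k : ℝ) := by exact_mod_cast hk
  have hxpos : 0 < x := lt_of_le_of_lt (by linarith) hx1
  have hsub : Finset.Icc 1 (k - 1) ⊆ Finset.Icc 1 (p - 1) := by
    apply Finset.Icc_subset_Icc_right
    exact Nat.sub_le_sub_right hkp 1
  have hcast : ((k - 1 : ℕ) : ℝ) = (k : ℝ) - 1 := by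
    push_cast [Nat.cast_sub hk]; ring
  have hsum : ∑ i ∈ Finset.Icc 1 (p - 1), (-1 : ℝ) ^ i * 2 * max 0 (x - i) =
      ∑ i ∈ Finset.Icc 1 (k - 1), (-1 : ℝ) ^ i * 2 * (x - i) := by
    rw [← Finset.sum_subset hsub]
    · apply Finset.sum_congr rfl
      intro i hi
      rw [Finset.mem_Icc] at hi
      have : (i : ℝ) ≤ (k : ℝ) - 1 := by
        rw [← hcast]; exact_mod_cast hi.2
      rw [max_eq_right (by linarith)]
    · intro i hi hni
      rw [Finset.mem_Icc] at hi
      rw [Finset.mem_Icc, not_and] at hni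
      have hik : k ≤ i := by
        have := hni hi.1
        omega
      have : (k : ℝ) ≤ (i : ℝ) := by exact_mod_cast hik
      rw [max_eq_left (by linarith)]
      ring
  rw [sawtooth, max_eq_right hxpos.le, hsum, saw_sum_formula]
  rcases Nat.even_or_odd (k - 1) with h | h
  · simp [h, hcast]; ring
  · simp [Nat.not_even_iff_odd.mpr h, hcast]
    ring

/-- The sawtooth function identifies the `p` intervals `(0,1), (1,2), …, (p-1,p)`:
the image of each open interval `(k-1, k)` equals `(0,1)`. -/
theorem sawtooth_identifies (p : ℕ) (hp : 1 ≤ p) (k : ℕ) (hk : 1 ≤ k) (hkp : k ≤ p) :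
    sawtooth p '' Set.Ioo ((k : ℝ) - 1) (k : ℝ) = Set.Ioo (0 : ℝ) 1 := by
  ext y
  simp only [Set.mem_image, Set.mem_Ioo]
  rcases Nat.even_or_odd (k - 1) with h | h
  · constructor
    · rintro ⟨x, ⟨hx1, hx2⟩, rfl⟩
      rw [sawtooth_on p k hk hkp x ⟨hx1, hx2⟩, if_pos h]
      constructor <;> linarith
    · rintro ⟨hy1, hy2⟩
      refine ⟨y + ((k : ℝ) - 1), ⟨by linarith, by linarith⟩, ?_⟩
      rw [sawtooth_on p k hk hkp _ ⟨by linarith, by linarith⟩, if_pos h]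
      ring
  · constructor
    · rintro ⟨x, ⟨hx1, hx2⟩, rfl⟩
      rw [sawtooth_on p k hk hkp x ⟨hx1, hx2⟩, if_neg (Nat.not_even_iff_odd.mpr h)]
      constructor <;> linarith
    · rintro ⟨hy1, hy2⟩
      refine ⟨(k : ℝ) - y, ⟨by linarith, by linarith⟩, ?_⟩
      rw [sawtooth_on p k hk hkp _ ⟨by linarith, by linarith⟩,
        if_neg (Nat.not_even_iff_odd.mpr h)]
      ring
end

section
/- An arrangement of m hyperplanes in ℝⁿ has at most Σ_{j=0}^{n} C(m, j) regions, where a region is a connected component of the complement of the union of the hyperplanes; equality holds when the hyperplanes are in general position. -/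
open Finset

/-- The hyperplane `{x : ℝⁿ | ⟨w, x⟩ = b}`. -/
def Hyperplane {n : ℕ} (w : Fin n → ℝ) (b : ℝ) : Set (Fin n → ℝ) :=
  {x | (∑ i, w i * x i) = b}

/-- The set of regions of the arrangement: connected components of the complement
of the union of the hyperplanes. -/
def ArrRegions {n m : ℕ} (w : Fin m → Fin n → ℝ) (b : Fin m → ℝ) : Set (Set (Fin n → ℝ)) :=
  {C | ∃ x ∈ (⋃ i, Hyperplane (w i) (b i))ᶜ,
        C = connectedComponentIn (⋃ i, Hyperplane (w i) (b i))ᶜ x}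

/-- The hyperplanes are in general position: any at most `n` of them have linearly
independent normals and a common point, and any more than `n` of them have empty
intersection. -/
def GeneralPosition {n m : ℕ} (w : Fin m → Fin n → ℝ) (b : Fin m → ℝ) : Prop :=
  (∀ S : Finset (Fin m), S.card ≤ n →
      LinearIndependent ℝ (fun i : S => w i) ∧ (⋂ i ∈ S, Hyperplane (w i) (b i)).Nonempty) ∧
  (∀ S : Finset (Fin m), n < S.card → (⋂ i ∈ S, Hyperplane (w i) (b i)) = ∅)

namespace Zas

noncomputable def sgn (t : Bool) : ℝ := if t then 1 else -1

lemma sgn_mul_self (t : Bool) : sgn t * sgn t = 1 := by cases t <;> norm_num [sgn]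

lemma abs_sgn (t : Bool) : |sgn t| = 1 := by cases t <;> norm_num [sgn]

lemma sgn_unique {s t : Bool} {c : ℝ} (hs : 0 < sgn s * c) (ht : 0 < sgn t * c) : s = t := by
  cases s <;> cases t <;> simp [sgn] at * <;> linarith

variable {V : Type} [AddCommGroup V] [Module ℝ V]

def cellV {m : ℕ} (f : Fin m → V →ₗ[ℝ] ℝ) (b : Fin m → ℝ) (σ : Fin m → Bool) : Set V :=
  {x | ∀ i, 0 < sgn (σ i) * (f i x - b i)}

def Rset {m : ℕ} (f : Fin m → V →ₗ[ℝ] ℝ) (b : Fin m → ℝ) : Set (Fin m → Bool) :=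
  {σ | (cellV f b σ).Nonempty}

noncomputable def NC {m : ℕ} (f : Fin m → V →ₗ[ℝ] ℝ) (b : Fin m → ℝ) : ℕ :=
  (Rset f b).ncard

lemma mem_cell_unique {m : ℕ} {f : Fin m → V →ₗ[ℝ] ℝ} {b : Fin m → ℝ} {σ τ : Fin m → Bool}
    {x : V} (hσ : x ∈ cellV f b σ) (hτ : x ∈ cellV f b τ) : σ = τ :=
  funext fun i => sgn_unique (hσ i) (hτ i)

lemma exists_eps {m : ℕ} (g h : Fin m → ℝ) (hg : ∀ i, 0 < g i) :
    ∃ ε : ℝ, 0 < ε ∧ ∀ i, |ε * h i| < g i := by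
  classical
  set s : Finset ℝ := insert 1 (univ.image (fun i => g i / (|h i| + 1))) with hs
  have hsne : s.Nonempty := ⟨1, by simp [hs]⟩
  have hall : ∀ y ∈ s, 0 < y := by
    intro y hy
    rw [hs] at hy
    rcases Finset.mem_insert.1 hy with h1 | h2
    · rw [h1]; norm_num
    · rcases Finset.mem_image.1 h2 with ⟨j, _, hj⟩
      rw [← hj]
      have : (0:ℝ) < |h j| + 1 := by positivity
      exact div_pos (hg j) this
  have hpos : 0 < s.min' hsne := hall _ (s.min'_mem hsne)
  refine ⟨s.min' hsne, hpos, ?_⟩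
  intro i
  set ε := s.min' hsne with hε
  have hmem : g i / (|h i| + 1) ∈ s := by
    rw [hs]; exact Finset.mem_insert_of_mem (Finset.mem_image_of_mem _ (Finset.mem_univ i))
  have hle : ε ≤ g i / (|h i| + 1) := Finset.min'_le _ _ hmem
  have h1 : (0:ℝ) < |h i| + 1 := by positivity
  have h2 : ε * (|h i| + 1) ≤ g i := (le_div_iff₀ h1).1 hle
  have h3 : |ε * h i| = ε * |h i| := by
    rw [abs_mul, abs_of_pos hpos]
  have h4 : ε * |h i| < ε * (|h i| + 1) := by
    apply mul_lt_mul_of_pos_left _ hpos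
    linarith
  linarith [h3 ▸ h4]

section Rec

variable {m : ℕ} (f : Fin (m+1) → V →ₗ[ℝ] ℝ) (b : Fin (m+1) → ℝ)

/-- the initial system -/
def fI : Fin m → V →ₗ[ℝ] ℝ := fun i => f i.castSucc
def bI : Fin m → ℝ := fun i => b i.castSucc

/-- cells of the initial system cut by the last hyperplane -/
def CutSet : Set (Fin m → Bool) :=
  {τ | ∃ z, z ∈ cellV (fI f) (bI b) τ ∧ f (Fin.last m) z = b (Fin.last m)}

/-- from a cut cell, both sign extensions are realizable -/
lemma cut_both {τ : Fin m → Bool} {z v : V}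
    (hz : z ∈ cellV (fI f) (bI b) τ) (hzl : f (Fin.last m) z = b (Fin.last m))
    (hv : f (Fin.last m) v = 1) (s : Bool) :
    (Fin.snoc τ s : Fin (m+1) → Bool) ∈ Rset f b := by
  obtain ⟨ε, hε, hεlt⟩ := exists_eps (fun i => sgn (τ i) * (fI f i z - bI b i))
    (fun i => (fI f i) v) (fun i => hz i)
  refine ⟨z + (sgn s * ε) • v, ?_⟩
  intro j
  induction j using Fin.lastCases with
  | last =>
      rw [Fin.snoc_last]
      have : f (Fin.last m) (z + (sgn s * ε) • v) - b (Fin.last m) = sgn s * ε := by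
        simp [map_add, map_smul, hv, hzl]
      rw [this, ← mul_assoc, sgn_mul_self]
      linarith
  | cast i =>
      rw [Fin.snoc_castSucc]
      have hval : f i.castSucc (z + (sgn s * ε) • v) - b i.castSucc
          = (fI f i z - bI b i) + sgn s * (ε * fI f i v) := by
        simp [fI, bI, map_add, map_smul]; ring
      rw [hval]
      have h1 : |ε * fI f i v| < sgn (τ i) * (fI f i z - bI b i) := hεlt i
      have h2 : |sgn (τ i) * (sgn s * (ε * fI f i v))| = |ε * fI f i v| := by
        rw [abs_mul, abs_mul, abs_sgn, abs_sgn, one_mul, one_mul]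
      have h3 : -(sgn (τ i) * (fI f i z - bI b i)) < sgn (τ i) * (sgn s * (ε * fI f i v)) := by
        have := neg_abs_le (sgn (τ i) * (sgn s * (ε * fI f i v)))
        rw [h2] at this
        linarith
      have : sgn (τ i) * ((fI f i z - bI b i) + sgn s * (ε * fI f i v))
          = sgn (τ i) * (fI f i z - bI b i) + sgn (τ i) * (sgn s * (ε * fI f i v)) := by ring
      rw [this]
      linarith

/-- if both sign extensions are realizable, the cell is cut -/
lemma crossing {τ : Fin m → Bool} {x y : V}
    (hx : x ∈ cellV f b (Fin.snoc τ true)) (hy : y ∈ cellV f b (Fin.snoc τ false)) :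
    τ ∈ CutSet f b := by
  set p := f (Fin.last m) x - b (Fin.last m) with hp
  set q := f (Fin.last m) y - b (Fin.last m) with hq
  have hpp : 0 < p := by
    have := hx (Fin.last m); rw [Fin.snoc_last] at this
    simp [sgn] at this; rw [hp]; linarith
  have hqq : q < 0 := by
    have := hy (Fin.last m); rw [Fin.snoc_last] at this
    simp [sgn] at this; linarith
  have hpq : 0 < p - q := by linarith
  set t := p / (p - q) with ht
  have ht0 : 0 < t := div_pos hpp hpq
  have ht1 : t < 1 := by
    rw [ht, div_lt_one hpq]; linarith
  refine ⟨x + t • (y - x), ?_, ?_⟩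
  · intro i
    have hxi := hx i.castSucc; rw [Fin.snoc_castSucc] at hxi
    have hyi := hy i.castSucc; rw [Fin.snoc_castSucc] at hyi
    have hval : fI f i (x + t • (y - x)) - bI b i
        = (1 - t) * (f i.castSucc x - b i.castSucc) + t * (f i.castSucc y - b i.castSucc) := by
      simp [fI, bI, map_add, map_smul, map_sub]; ring
    rw [hval, mul_add]
    have h1 : 0 < (1 - t) * (sgn (τ i) * (f i.castSucc x - b i.castSucc)) :=
      mul_pos (by linarith) hxi
    have h2 : 0 < t * (sgn (τ i) * (f i.castSucc y - b i.castSucc)) := mul_pos ht0 hyi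
    nlinarith
  · have : f (Fin.last m) (x + t • (y - x)) = (b (Fin.last m) + p) + t * (q - p) := by
      simp [map_add, map_smul, map_sub]
      rw [hp, hq]; ring
    rw [this, ht]
    field_simp
    ring

lemma init_mem {σ : Fin (m+1) → Bool} (hσ : σ ∈ Rset f b) :
    Fin.init σ ∈ Rset (fI f) (bI b) := by
  obtain ⟨x, hx⟩ := hσ
  exact ⟨x, fun i => hx i.castSucc⟩

lemma cut_subset : CutSet f b ⊆ Rset (fI f) (bI b) := fun τ ⟨z, hz, _⟩ => ⟨z, hz⟩

lemma snoc_mem_of_witness {τ : Fin m → Bool} {x : V} (hx : x ∈ cellV (fI f) (bI b) τ)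
    (hne : f (Fin.last m) x ≠ b (Fin.last m)) :
    (Fin.snoc τ (decide (b (Fin.last m) < f (Fin.last m) x)) : Fin (m+1) → Bool) ∈ Rset f b := by
  refine ⟨x, fun j => ?_⟩
  induction j using Fin.lastCases with
  | last =>
      rw [Fin.snoc_last]
      by_cases h : b (Fin.last m) < f (Fin.last m) x
      · simp only [h, decide_true]
        simp [sgn]; linarith
      · have hlt : f (Fin.last m) x < b (Fin.last m) := lt_of_le_of_ne (not_lt.1 h) hne
        simp only [h, decide_false]
        simp [sgn]; linarith
  | cast i => rw [Fin.snoc_castSucc]; exact hx i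

set_option maxHeartbeats 1000000 in
lemma NC_rec :
    (NC f b ≤ NC (fI f) (bI b) + (CutSet f b).ncard) ∧
    ((∃ v, f (Fin.last m) v = 1) → NC f b = NC (fI f) (bI b) + (CutSet f b).ncard) := by
  classical
  have hBfin : (Rset f b).Finite := Set.toFinite _
  have hAfin : (Rset (fI f) (bI b)).Finite := Set.toFinite _
  have hCfin : (CutSet f b).Finite := Set.toFinite _
  set B := hBfin.toFinset with hB
  set A := hAfin.toFinset with hA
  set C := hCfin.toFinset with hC
  have hNCb : NC f b = B.card := Set.ncard_eq_toFinset_card _ _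
  have hNCa : NC (fI f) (bI b) = A.card := Set.ncard_eq_toFinset_card _ _
  have hNCc : (CutSet f b).ncard = C.card := Set.ncard_eq_toFinset_card _ _
  have hmaps : ∀ σ ∈ B, Fin.init σ ∈ A := by
    intro σ hσ
    rw [Set.Finite.mem_toFinset] at *
    exact init_mem f b hσ
  have hsum : B.card = ∑ τ ∈ A, (B.filter fun σ => Fin.init σ = τ).card :=
    Finset.card_eq_sum_card_fiberwise hmaps
  have hCA : C ⊆ A := by
    intro τ hτ
    rw [Set.Finite.mem_toFinset] at *
    exact cut_subset f b hτ
  -- each fiber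
  have hfib_sub : ∀ τ : Fin m → Bool, (B.filter fun σ => Fin.init σ = τ)
      ⊆ {Fin.snoc τ false, Fin.snoc τ true} := by
    intro τ σ hσ
    rw [Finset.mem_filter] at hσ
    have : σ = Fin.snoc τ (σ (Fin.last m)) := by
      rw [← hσ.2]; exact (Fin.snoc_init_self σ).symm
    rcases Bool.eq_false_or_eq_true (σ (Fin.last m)) with h | h <;>
      · rw [h] at this
        simp [this]
  have hub : ∀ τ ∈ A, (B.filter fun σ => Fin.init σ = τ).card ≤ if τ ∈ C then 2 else 1 := by
    intro τ _
    by_cases hτC : τ ∈ C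
    · rw [if_pos hτC]
      calc (B.filter fun σ => Fin.init σ = τ).card
          ≤ ({Fin.snoc τ false, Fin.snoc τ true} : Finset _).card :=
            Finset.card_le_card (hfib_sub τ)
        _ ≤ 2 := by
            apply le_trans (Finset.card_insert_le _ _); simp
    · rw [if_neg hτC]
      rw [Finset.card_le_one]
      intro σ₁ h₁ σ₂ h₂
      rw [Finset.mem_filter] at h₁ h₂
      have e₁ : σ₁ = Fin.snoc τ (σ₁ (Fin.last m)) := by
        rw [← h₁.2]; exact (Fin.snoc_init_self σ₁).symm
      have e₂ : σ₂ = Fin.snoc τ (σ₂ (Fin.last m)) := by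
        rw [← h₂.2]; exact (Fin.snoc_init_self σ₂).symm
      by_cases hss : σ₁ (Fin.last m) = σ₂ (Fin.last m)
      · rw [e₁, e₂, hss]
      · exfalso
        apply hτC
        rw [hC, Set.Finite.mem_toFinset]
        have hm₁ : σ₁ ∈ Rset f b := by rw [hB, Set.Finite.mem_toFinset] at h₁; exact h₁.1
        have hm₂ : σ₂ ∈ Rset f b := by rw [hB, Set.Finite.mem_toFinset] at h₂; exact h₂.1
        obtain ⟨x₁, hx₁⟩ := hm₁
        obtain ⟨x₂, hx₂⟩ := hm₂
        rcases Bool.eq_false_or_eq_true (σ₁ (Fin.last m)) with hb1 | hb1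
        · have hb2 : σ₂ (Fin.last m) = false := by
            rcases Bool.eq_false_or_eq_true (σ₂ (Fin.last m)) with h | h
            · exact absurd (hb1.trans h.symm) hss
            · exact h
          rw [e₁, hb1] at hx₁; rw [e₂, hb2] at hx₂
          exact crossing f b hx₁ hx₂
        · have hb2 : σ₂ (Fin.last m) = true := by
            rcases Bool.eq_false_or_eq_true (σ₂ (Fin.last m)) with h | h
            · exact h
            · exact absurd (hb1.trans h.symm) hss
          rw [e₁, hb1] at hx₁; rw [e₂, hb2] at hx₂
          exact crossing f b hx₂ hx₁
  have hsum_ite : ∑ τ ∈ A, (if τ ∈ C then 2 else 1)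
      = A.card + (A.filter (fun τ => τ ∈ C)).card := by
    rw [Finset.sum_ite, Finset.sum_const, Finset.sum_const, smul_eq_mul, smul_eq_mul]
    have := Finset.card_filter_add_card_filter_not (s := A) (p := fun τ => τ ∈ C)
    omega
  have hfilter_eq : A.filter (fun τ => τ ∈ C) = C :=
    Finset.ext fun τ => by
      simp only [Finset.mem_filter]
      exact ⟨fun h => h.2, fun h => ⟨hCA h, h⟩⟩
  constructor
  · rw [hNCb, hNCa, hNCc, hsum]
    calc ∑ τ ∈ A, (B.filter fun σ => Fin.init σ = τ).card
        ≤ ∑ τ ∈ A, (if τ ∈ C then 2 else 1) := Finset.sum_le_sum hub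
      _ = A.card + C.card := by rw [hsum_ite, hfilter_eq]
  · rintro ⟨v, hv⟩
    have hlb : ∀ τ ∈ A, (if τ ∈ C then 2 else 1) ≤ (B.filter fun σ => Fin.init σ = τ).card := by
      intro τ hτA
      by_cases hτC : τ ∈ C
      · rw [if_pos hτC]
        have hcut : τ ∈ CutSet f b := by rw [hC, Set.Finite.mem_toFinset] at hτC; exact hτC
        obtain ⟨z, hz, hzl⟩ := hcut
        have hsub : ({Fin.snoc τ false, Fin.snoc τ true} : Finset _)
            ⊆ B.filter fun σ => Fin.init σ = τ := by
          intro σ hσ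
          rw [Finset.mem_insert, Finset.mem_singleton] at hσ
          rw [Finset.mem_filter, hB, Set.Finite.mem_toFinset]
          rcases hσ with h | h <;>
            · rw [h]
              exact ⟨cut_both f b hz hzl hv _, Fin.init_snoc _ _⟩
        have hne : (Fin.snoc τ false : Fin (m+1) → Bool) ≠ Fin.snoc τ true := by
          intro h
          have := congrFun h (Fin.last m)
          rw [Fin.snoc_last, Fin.snoc_last] at this
          exact Bool.false_ne_true this
        have h2 : ({Fin.snoc τ false, Fin.snoc τ true} : Finset (Fin (m+1) → Bool)).card = 2 :=
          Finset.card_pair hne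
        exact le_of_eq_of_le h2.symm (Finset.card_le_card hsub)
      · rw [if_neg hτC]
        rw [Nat.one_le_iff_ne_zero, ← Nat.pos_iff_ne_zero, Finset.card_pos]
        have hmem : τ ∈ Rset (fI f) (bI b) := by
          rw [hA, Set.Finite.mem_toFinset] at hτA; exact hτA
        obtain ⟨x, hx⟩ := hmem
        have hne : f (Fin.last m) x ≠ b (Fin.last m) := by
          intro h; apply hτC; rw [hC, Set.Finite.mem_toFinset]; exact ⟨x, hx, h⟩
        refine ⟨Fin.snoc τ (decide (b (Fin.last m) < f (Fin.last m) x)), ?_⟩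
        rw [Finset.mem_filter, hB, Set.Finite.mem_toFinset]
        exact ⟨snoc_mem_of_witness f b hx hne, Fin.init_snoc _ _⟩
    have : ∑ τ ∈ A, (B.filter fun σ => Fin.init σ = τ).card
        = ∑ τ ∈ A, (if τ ∈ C then 2 else 1) :=
      le_antisymm (Finset.sum_le_sum hub) (Finset.sum_le_sum hlb)
    rw [hNCb, hNCa, hNCc, hsum, this, hsum_ite, hfilter_eq]

end Rec

section Restrict

variable {m : ℕ} (f : Fin (m+1) → V →ₗ[ℝ] ℝ) (b : Fin (m+1) → ℝ)

lemma cut_eq_restrict {x0 : V} (hx0 : f (Fin.last m) x0 = b (Fin.last m)) :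
    CutSet f b = Rset (fun i : Fin m => (f i.castSucc).comp (LinearMap.ker (f (Fin.last m))).subtype)
      (fun i : Fin m => b i.castSucc - f i.castSucc x0) := by
  ext τ
  constructor
  · rintro ⟨z, hz, hzl⟩
    have hker : z - x0 ∈ LinearMap.ker (f (Fin.last m)) := by
      rw [LinearMap.mem_ker, map_sub, hzl, hx0, sub_self]
    refine ⟨⟨z - x0, hker⟩, fun i => ?_⟩
    have : (f i.castSucc).comp (LinearMap.ker (f (Fin.last m))).subtype ⟨z - x0, hker⟩
        - (b i.castSucc - f i.castSucc x0) = fI f i z - bI b i := by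
      simp [fI, bI, map_sub]; try ring
    rw [this]
    exact hz i
  · rintro ⟨u, hu⟩
    refine ⟨x0 + u.1, fun i => ?_, ?_⟩
    · have : fI f i (x0 + u.1) - bI b i
          = (f i.castSucc).comp (LinearMap.ker (f (Fin.last m))).subtype u
            - (b i.castSucc - f i.castSucc x0) := by
        simp [fI, bI, map_add]; try ring
      rw [this]
      exact hu i
    · have hu2 : f (Fin.last m) u.1 = 0 := u.2
      rw [map_add, hu2, add_zero, hx0]

end Restrict

lemma factor {g fl : V →ₗ[ℝ] ℝ} {v : V} (hv : fl v = 1) (h : ∀ x, fl x = 0 → g x = 0) :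
    g = (g v) • fl := by
  ext x
  have hker : fl (x - fl x • v) = 0 := by
    rw [map_sub, map_smul, hv, smul_eq_mul, mul_one, sub_self]
  have h2 := h _ hker
  rw [map_sub, map_smul, smul_eq_mul, sub_eq_zero] at h2
  rw [LinearMap.smul_apply, smul_eq_mul, h2]
  ring

lemma finrank_ker_add_one {fl : V →ₗ[ℝ] ℝ} [FiniteDimensional ℝ V] (hfl : fl ≠ 0) :
    Module.finrank ℝ (LinearMap.ker fl) + 1 = Module.finrank ℝ V := by
  obtain ⟨v, hv⟩ := DFunLike.ne_iff.1 hfl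
  rw [LinearMap.zero_apply] at hv
  have hsurj : Function.Surjective fl := by
    intro c
    exact ⟨(c / fl v) • v, by rw [map_smul, smul_eq_mul]; field_simp⟩
  have hr : LinearMap.range fl = ⊤ := LinearMap.range_eq_top.2 hsurj
  have := LinearMap.finrank_range_add_finrank_ker fl
  rw [hr] at this
  rw [finrank_top ℝ ℝ] at this
  rw [Module.finrank_self] at this
  omega

lemma pascal (m n : ℕ) :
    ∑ j ∈ range (n+2), (m+1).choose j
      = ∑ j ∈ range (n+2), m.choose j + ∑ j ∈ range (n+1), m.choose j := by
  rw [Finset.sum_range_succ' (fun j => (m+1).choose j) (n+1),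
    Finset.sum_range_succ' (fun j => Nat.choose m j) (n+1)]
  simp only [Nat.choose_succ_succ, Nat.choose_zero_right, Finset.sum_add_distrib]
  ring

lemma sum_choose_zero (n : ℕ) : ∑ j ∈ range (n+1), Nat.choose 0 j = 1 := by
  induction n with
  | zero => simp
  | succ k ih => rw [Finset.sum_range_succ, ih, Nat.choose_eq_zero_of_lt (Nat.succ_pos k)]

lemma one_le_sum_choose (m n : ℕ) : 1 ≤ ∑ j ∈ range (n+1), m.choose j := by
  have h0 : (0:ℕ) ∈ range (n+1) := by simp
  have := Finset.single_le_sum (f := fun j => m.choose j)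
    (fun i _ => Nat.zero_le _) h0
  simpa using this

lemma sum_choose_mono (m n : ℕ) :
    ∑ j ∈ range (n+1), m.choose j ≤ ∑ j ∈ range (n+1), (m+1).choose j :=
  Finset.sum_le_sum fun j _ => Nat.choose_le_choose j (Nat.le_succ m)

lemma NC_le_one_of_forall_eq {m : ℕ} {W : Type} [AddCommGroup W] [Module ℝ W]
    {f : Fin m → W →ₗ[ℝ] ℝ} {b : Fin m → ℝ}
    (h : ∀ σ ∈ Rset f b, ∀ τ ∈ Rset f b, σ = τ) : NC f b ≤ 1 :=
  (Set.ncard_le_one (Set.toFinite _)).2 h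

theorem upper (m : ℕ) : ∀ (n : ℕ) (V : Type) [AddCommGroup V] [Module ℝ V]
    [FiniteDimensional ℝ V], Module.finrank ℝ V ≤ n →
    ∀ (f : Fin m → V →ₗ[ℝ] ℝ) (b : Fin m → ℝ),
    NC f b ≤ ∑ j ∈ range (n+1), m.choose j := by
  induction m with
  | zero =>
      intro n V _ _ _ _ f b
      refine le_trans (NC_le_one_of_forall_eq fun σ _ τ _ => Subsingleton.elim σ τ)
        (one_le_sum_choose 0 n)
  | succ m ih =>
      intro n V _ _ _ hd f b
      by_cases hl : f (Fin.last m) = 0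
      · have hinj : Set.InjOn Fin.init (Rset f b) := by
          intro σ hσ τ hτ he
          obtain ⟨x, hx⟩ := hσ
          obtain ⟨y, hy⟩ := hτ
          have hsx := hx (Fin.last m)
          have hsy := hy (Fin.last m)
          rw [hl, LinearMap.zero_apply] at hsx hsy
          have hlast : σ (Fin.last m) = τ (Fin.last m) := sgn_unique hsx hsy
          rw [← Fin.snoc_init_self σ, ← Fin.snoc_init_self τ, he, hlast]
        have hsub : Fin.init '' (Rset f b) ⊆ Rset (fI f) (bI b) := by
          rintro _ ⟨σ, hσ, rfl⟩
          exact init_mem f b hσ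
        calc NC f b = (Fin.init '' (Rset f b)).ncard := (Set.ncard_image_of_injOn hinj).symm
          _ ≤ NC (fI f) (bI b) := Set.ncard_le_ncard hsub (Set.toFinite _)
          _ ≤ ∑ j ∈ range (n+1), m.choose j := ih n V hd (fI f) (bI b)
          _ ≤ ∑ j ∈ range (n+1), (m+1).choose j := sum_choose_mono m n
      · obtain ⟨v, hv⟩ := DFunLike.ne_iff.1 hl
        rw [LinearMap.zero_apply] at hv
        cases n with
        | zero =>
            exfalso
            have h0 : Module.finrank ℝ V = 0 := Nat.le_zero.1 hd
            have : Subsingleton V := Module.finrank_zero_iff.1 h0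
            apply hv
            rw [Subsingleton.elim v 0, map_zero]
        | succ n' =>
            have hx0 : f (Fin.last m) ((b (Fin.last m) / f (Fin.last m) v) • v)
                = b (Fin.last m) := by
              rw [map_smul, smul_eq_mul]
              field_simp
            have hrec := (NC_rec f b).1
            rw [cut_eq_restrict f b hx0] at hrec
            have hkrk : Module.finrank ℝ (LinearMap.ker (f (Fin.last m))) ≤ n' := by
              have := finrank_ker_add_one (V := V) hl
              omega
            have h1 : NC (fI f) (bI b) ≤ ∑ j ∈ range (n'+2), m.choose j :=
              ih (n'+1) V hd (fI f) (bI b)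
            have h2 : (Rset (fun i : Fin m => (f i.castSucc).comp
                  (LinearMap.ker (f (Fin.last m))).subtype)
                (fun i : Fin m => b i.castSucc
                  - f i.castSucc ((b (Fin.last m) / f (Fin.last m) v) • v))).ncard
                ≤ ∑ j ∈ range (n'+1), m.choose j :=
              ih n' (LinearMap.ker (f (Fin.last m))) hkrk
                (fun i : Fin m => (f i.castSucc).comp (LinearMap.ker (f (Fin.last m))).subtype)
                (fun i : Fin m => b i.castSucc - f i.castSucc ((b (Fin.last m) / f (Fin.last m) v) • v))
            have hgoal : (∑ j ∈ range (n'+1+1), (m+1).choose j : ℕ)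
                = ∑ j ∈ range (n'+2), m.choose j + ∑ j ∈ range (n'+1), m.choose j :=
              pascal m n'
            rw [hgoal]
            omega

def csEmb (m : ℕ) : Fin m ↪ Fin (m+1) := ⟨Fin.castSucc, Fin.castSucc_injective m⟩

lemma csEmb_ne_last {m : ℕ} (i : Fin m) : csEmb m i ≠ Fin.last m :=
  (Fin.castSucc_lt_last i).ne

def AGP (n : ℕ) {m : ℕ} (f : Fin m → V →ₗ[ℝ] ℝ) (b : Fin m → ℝ) : Prop :=
  (∀ S : Finset (Fin m), S.card ≤ n →
      (∀ c : Fin m → ℝ, ∑ i ∈ S, c i • f i = 0 → ∀ i ∈ S, c i = 0) ∧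
      ∃ x, ∀ i ∈ S, f i x = b i) ∧
  (∀ S : Finset (Fin m), n < S.card → ∀ x : V, ∃ i ∈ S, f i x ≠ b i)

lemma AGP_init {m n : ℕ} {f : Fin (m+1) → V →ₗ[ℝ] ℝ} {b : Fin (m+1) → ℝ}
    (h : AGP n f b) : AGP n (fI f) (bI b) := by
  constructor
  · intro S hS
    have h1 := h.1 (S.map (csEmb m)) (by rwa [Finset.card_map])
    constructor
    · intro c hc i hi
      set C : Fin (m+1) → ℝ := fun j => Fin.lastCases 0 c j with hC
      have hCs : ∀ i : Fin m, C i.castSucc = c i := fun i => by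
        simp [hC, Fin.lastCases_castSucc]
      have hsum : ∑ j ∈ S.map (csEmb m), C j • f j = 0 := by
        rw [Finset.sum_map]
        have : ∀ i ∈ S, C (csEmb m i) • f (csEmb m i) = c i • fI f i := by
          intro i _
          show C i.castSucc • f i.castSucc = c i • fI f i
          rw [hCs i]; rfl
        rw [Finset.sum_congr rfl this, hc]
      have := h1.1 C hsum i.castSucc (Finset.mem_map_of_mem _ hi)
      rwa [hCs i] at this
    · obtain ⟨x, hx⟩ := h1.2
      exact ⟨x, fun i hi => hx i.castSucc (Finset.mem_map_of_mem _ hi)⟩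
  · intro S hS x
    obtain ⟨j, hj, hne⟩ := h.2 (S.map (csEmb m)) (by rwa [Finset.card_map]) x
    obtain ⟨i, hi, rfl⟩ := Finset.mem_map.1 hj
    exact ⟨i, hi, hne⟩

lemma AGP_restrict {m n' : ℕ} {f : Fin (m+1) → V →ₗ[ℝ] ℝ} {b : Fin (m+1) → ℝ} {v x0 : V}
    (hv : f (Fin.last m) v = 1) (hx0 : f (Fin.last m) x0 = b (Fin.last m))
    (h : AGP (n'+1) f b) :
    AGP n' (fun i : Fin m => (f i.castSucc).comp (LinearMap.ker (f (Fin.last m))).subtype)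
      (fun i : Fin m => b i.castSucc - f i.castSucc x0) := by
  constructor
  · intro S hS
    have hlastnot : Fin.last m ∉ S.map (csEmb m) := by
      intro hmem
      obtain ⟨i, _, hi⟩ := Finset.mem_map.1 hmem
      exact csEmb_ne_last i hi
    have hcard : (insert (Fin.last m) (S.map (csEmb m))).card ≤ n'+1 := by
      rw [Finset.card_insert_of_notMem hlastnot, Finset.card_map]
      omega
    have h1 := h.1 _ hcard
    constructor
    · intro c hc i hi
      set g : V →ₗ[ℝ] ℝ := ∑ i ∈ S, c i • f i.castSucc with hg
      have hgx : ∀ x : V, g x = ∑ i ∈ S, c i * f i.castSucc x := by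
        intro x
        rw [hg, LinearMap.sum_apply]
        exact Finset.sum_congr rfl fun i _ => by rw [LinearMap.smul_apply, smul_eq_mul]
      have hker0 : ∀ x, f (Fin.last m) x = 0 → g x = 0 := by
        intro x hx
        have hxK : x ∈ LinearMap.ker (f (Fin.last m)) := LinearMap.mem_ker.2 hx
        have h2 : (∑ i ∈ S, c i • (f i.castSucc).comp
            (LinearMap.ker (f (Fin.last m))).subtype) ⟨x, hxK⟩ = 0 := by rw [hc]; rfl
        rw [LinearMap.sum_apply] at h2
        rw [hgx]
        rw [← h2]
        exact Finset.sum_congr rfl fun i _ => by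
          rw [LinearMap.smul_apply, smul_eq_mul]; rfl
      have hfac : g = g v • f (Fin.last m) := factor hv hker0
      set a : ℝ := g v with ha
      set C : Fin (m+1) → ℝ := fun j => Fin.lastCases (-a) c j with hC
      have hCs : ∀ i : Fin m, C i.castSucc = c i := fun i => by
        simp [hC, Fin.lastCases_castSucc]
      have hClast : C (Fin.last m) = -a := by simp [hC]
      have hsum : ∑ j ∈ insert (Fin.last m) (S.map (csEmb m)), C j • f j = 0 := by
        rw [Finset.sum_insert hlastnot, Finset.sum_map, hClast]
        have : ∀ i ∈ S, C (csEmb m i) • f (csEmb m i) = c i • f i.castSucc := by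
          intro i _
          show C i.castSucc • f i.castSucc = _
          rw [hCs i]
        rw [Finset.sum_congr rfl this, ← hg, hfac]
        rw [← add_smul, neg_add_cancel, zero_smul]

      have hall := h1.1 C hsum
      have := hall i.castSucc
        (Finset.mem_insert_of_mem (Finset.mem_map_of_mem _ hi))
      rwa [hCs i] at this
    · obtain ⟨x, hx⟩ := h1.2
      have hxl : f (Fin.last m) x = b (Fin.last m) :=
        hx _ (Finset.mem_insert_self _ _)
      have hxK : x - x0 ∈ LinearMap.ker (f (Fin.last m)) := by
        rw [LinearMap.mem_ker, map_sub, hxl, hx0, sub_self]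
      refine ⟨⟨x - x0, hxK⟩, fun i hi => ?_⟩
      have hxi : f i.castSucc x = b i.castSucc := by
        have : (csEmb m i : Fin (m+1)) ∈ insert (Fin.last m) (S.map (csEmb m)) :=
          Finset.mem_insert_of_mem (Finset.mem_map_of_mem _ hi)
        exact hx _ this
      show f i.castSucc (x - x0) = b i.castSucc - f i.castSucc x0
      rw [map_sub, hxi]
  · intro S hScard u
    by_contra hcon
    push_neg at hcon
    have hlastnot : Fin.last m ∉ S.map (csEmb m) := by
      intro hmem
      obtain ⟨i, _, hi⟩ := Finset.mem_map.1 hmem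
      exact csEmb_ne_last i hi
    have hcard : n'+1 < (insert (Fin.last m) (S.map (csEmb m))).card := by
      rw [Finset.card_insert_of_notMem hlastnot, Finset.card_map]
      omega
    obtain ⟨j, hj, hne⟩ := h.2 _ hcard (x0 + u.1)
    apply hne
    rcases Finset.mem_insert.1 hj with hj | hj
    · subst hj
      rw [map_add, hx0, u.2, add_zero]
    · obtain ⟨i, hi, rfl⟩ := Finset.mem_map.1 hj
      have := hcon i hi
      show f i.castSucc (x0 + u.1) = b i.castSucc
      have hval : f i.castSucc u.1 = b i.castSucc - f i.castSucc x0 := this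
      rw [map_add, hval]
      ring

theorem equal (m : ℕ) : ∀ (n : ℕ) (V : Type) [AddCommGroup V] [Module ℝ V]
    [FiniteDimensional ℝ V], Module.finrank ℝ V = n →
    ∀ (f : Fin m → V →ₗ[ℝ] ℝ) (b : Fin m → ℝ), AGP n f b →
    NC f b = ∑ j ∈ range (n+1), m.choose j := by
  induction m with
  | zero =>
      intro n V _ _ _ _ f b _
      rw [sum_choose_zero n]
      have huniv : Rset f b = Set.univ :=
        Set.eq_univ_of_forall fun σ => ⟨0, fun i => i.elim0⟩
      rw [NC, huniv, Set.ncard_univ, Nat.card_eq_fintype_card]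
      simp
  | succ m ih =>
      intro n V _ _ _ hd f b hGP
      cases n with
      | zero =>
          have hsub : Subsingleton V := Module.finrank_zero_iff.1 hd
          have hbne : ∀ i, b i ≠ 0 := by
            intro i hbi
            obtain ⟨j, hj, hne⟩ := hGP.2 {i} (by simp) 0
            rw [Finset.mem_singleton] at hj
            subst hj
            exact hne (by rw [map_zero, hbi])
          have hcell0 : ∀ i : Fin (m+1), 0 < sgn (decide (b i < 0)) * (f i 0 - b i) := by
            intro i
            rw [map_zero]
            by_cases hb : b i < 0
            · simp only [hb, decide_true]
              simp [sgn]
              linarith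
            · have hbpos : 0 < b i := lt_of_le_of_ne (not_lt.1 hb) (Ne.symm (hbne i))
              simp only [hb, decide_false]
              simp [sgn]
              linarith
          have hset : Rset f b = {fun i => decide (b i < 0)} := by
            ext σ
            constructor
            · rintro ⟨x, hx⟩
              have hx0 : x = 0 := Subsingleton.elim x 0
              rw [hx0] at hx
              have hσ : σ = fun i => decide (b i < 0) :=
                funext fun i => sgn_unique (hx i) (hcell0 i)
              simp [hσ]
            · intro hσ
              rw [Set.mem_singleton_iff] at hσ
              subst hσ
              exact ⟨0, hcell0⟩
          rw [NC, hset, Set.ncard_singleton, Finset.sum_range_one, Nat.choose_zero_right]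
      | succ n' =>
          have hl : f (Fin.last m) ≠ 0 := by
            intro h0
            have h1 := (hGP.1 {Fin.last m} (by simp)).1
            have h2 : ∑ i ∈ ({Fin.last m} : Finset (Fin (m+1))), (1:ℝ) • f i = 0 := by
              rw [Finset.sum_singleton, h0, smul_zero]
            exact one_ne_zero (h1 (fun _ => (1:ℝ)) h2 (Fin.last m) (Finset.mem_singleton_self _))
          obtain ⟨v₀, hv₀⟩ := DFunLike.ne_iff.1 hl
          rw [LinearMap.zero_apply] at hv₀
          have hv : f (Fin.last m) ((f (Fin.last m) v₀)⁻¹ • v₀) = 1 := by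
            rw [map_smul, smul_eq_mul]
            field_simp
          set v : V := (f (Fin.last m) v₀)⁻¹ • v₀ with hvdef
          set x0 : V := b (Fin.last m) • v with hx0def
          have hx0 : f (Fin.last m) x0 = b (Fin.last m) := by
            rw [hx0def, map_smul, smul_eq_mul, hv, mul_one]
          have hrec := (NC_rec f b).2 ⟨v, hv⟩
          rw [cut_eq_restrict f b hx0] at hrec
          have hAGPi : AGP (n'+1) (fI f) (bI b) := AGP_init hGP
          have hAGPr := AGP_restrict hv hx0 hGP
          have hkrk : Module.finrank ℝ (LinearMap.ker (f (Fin.last m))) = n' := by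
            have := finrank_ker_add_one (V := V) hl
            omega
          have h1 : NC (fI f) (bI b) = ∑ j ∈ range (n'+2), m.choose j :=
            ih (n'+1) V hd (fI f) (bI b) hAGPi
          have h2 : (Rset (fun i : Fin m => (f i.castSucc).comp
                (LinearMap.ker (f (Fin.last m))).subtype)
              (fun i : Fin m => b i.castSucc - f i.castSucc x0)).ncard
              = ∑ j ∈ range (n'+1), m.choose j :=
            ih n' (LinearMap.ker (f (Fin.last m))) hkrk _ _ hAGPr
          have hgoal : (∑ j ∈ range (n'+1+1), (m+1).choose j : ℕ)
              = ∑ j ∈ range (n'+2), m.choose j + ∑ j ∈ range (n'+1), m.choose j :=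
            pascal m n'
          rw [hgoal, hrec, h1, h2]

lemma cell_convex {m : ℕ} (f : Fin m → V →ₗ[ℝ] ℝ) (b : Fin m → ℝ) (σ : Fin m → Bool) :
    Convex ℝ (cellV f b σ) := by
  intro x hx y hy p q hp hq hpq
  intro i
  have hval : f i (p • x + q • y) - b i = p * (f i x - b i) + q * (f i y - b i) := by
    simp only [map_add, map_smul, smul_eq_mul]
    linear_combination (b i) * hpq
  have hA := hx i
  have hB := hy i
  have hkey : sgn (σ i) * (f i (p • x + q • y) - b i)
      = p * (sgn (σ i) * (f i x - b i)) + q * (sgn (σ i) * (f i y - b i)) := by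
    rw [hval]; ring
  rw [hkey]
  rcases eq_or_lt_of_le hp with hp0 | hp0
  · have hq1 : q = 1 := by linarith
    rw [← hp0, hq1]
    simp
    linarith
  · have h1 := mul_pos hp0 hA
    have h2 := mul_nonneg hq hB.le
    linarith

end Zas

open Zas

noncomputable def dotL {n : ℕ} (w : Fin n → ℝ) : (Fin n → ℝ) →ₗ[ℝ] ℝ where
  toFun x := ∑ i, w i * x i
  map_add' x y := by
    simp only [Pi.add_apply, mul_add]
    rw [Finset.sum_add_distrib]
  map_smul' c x := by
    simp only [Pi.smul_apply, smul_eq_mul, RingHom.id_apply]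
    rw [Finset.mul_sum]
    exact Finset.sum_congr rfl fun i _ => by ring

lemma dotL_apply {n : ℕ} (w x : Fin n → ℝ) : dotL w x = ∑ i, w i * x i := rfl

lemma dotL_cont {n : ℕ} (w : Fin n → ℝ) : Continuous (dotL w) := by
  show Continuous fun x : Fin n → ℝ => ∑ i, w i * x i
  exact continuous_finset_sum _ fun i _ => continuous_const.mul (continuous_apply i)

lemma cell_open {n m : ℕ} (w : Fin m → Fin n → ℝ) (b : Fin m → ℝ) (σ : Fin m → Bool) :
    IsOpen (cellV (fun i => dotL (w i)) b σ) := by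
  have heq : cellV (fun i => dotL (w i)) b σ
      = ⋂ i, (fun x => sgn (σ i) * (dotL (w i) x - b i)) ⁻¹' Set.Ioi 0 := by
    ext x
    simp [cellV, Set.mem_iInter]
  rw [heq]
  exact isOpen_iInter_of_finite fun i =>
    isOpen_Ioi.preimage (continuous_const.mul ((dotL_cont (w i)).sub continuous_const))

lemma mem_U_iff {n m : ℕ} (w : Fin m → Fin n → ℝ) (b : Fin m → ℝ) (x : Fin n → ℝ) :
    x ∈ (⋃ i, Hyperplane (w i) (b i))ᶜ ↔ ∀ i, dotL (w i) x ≠ b i := by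
  simp [Hyperplane, Set.mem_iUnion, dotL_apply]

lemma cell_subset_U {n m : ℕ} (w : Fin m → Fin n → ℝ) (b : Fin m → ℝ) (σ : Fin m → Bool) :
    cellV (fun i => dotL (w i)) b σ ⊆ (⋃ i, Hyperplane (w i) (b i))ᶜ := by
  intro y hy
  rw [mem_U_iff]
  intro i heq
  have := hy i
  rw [heq, sub_self, mul_zero] at this
  exact lt_irrefl 0 this

lemma mem_own_cell {n m : ℕ} (w : Fin m → Fin n → ℝ) (b : Fin m → ℝ) {x : Fin n → ℝ}
    (hx : x ∈ (⋃ i, Hyperplane (w i) (b i))ᶜ) :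
    x ∈ cellV (fun i => dotL (w i)) b (fun i => decide (b i < dotL (w i) x)) := by
  intro i
  rcases lt_or_gt_of_ne ((mem_U_iff w b x).1 hx i) with h | h
  · have : ¬ (b i < dotL (w i) x) := by linarith
    simp only [this, decide_false]
    simp [sgn]
    linarith
  · simp only [h, decide_true]
    simp [sgn]
    linarith

lemma component_eq_cell {n m : ℕ} (w : Fin m → Fin n → ℝ) (b : Fin m → ℝ) {x : Fin n → ℝ}
    (hx : x ∈ (⋃ i, Hyperplane (w i) (b i))ᶜ) :
    connectedComponentIn (⋃ i, Hyperplane (w i) (b i))ᶜ x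
      = cellV (fun i => dotL (w i)) b (fun i => decide (b i < dotL (w i) x)) := by
  classical
  set U := (⋃ i, Hyperplane (w i) (b i))ᶜ with hU
  set σx : Fin m → Bool := fun i => decide (b i < dotL (w i) x) with hσx
  have hxc : x ∈ cellV (fun i => dotL (w i)) b σx := mem_own_cell w b hx
  apply Set.Subset.antisymm
  · -- component ⊆ cell
    set u := cellV (fun i => dotL (w i)) b σx with hu
    set v := ⋃ (σ' : Fin m → Bool) (_ : σ' ≠ σx), cellV (fun i => dotL (w i)) b σ' with hv2
    have hOu : IsOpen u := cell_open w b σx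
    have hOv : IsOpen v := isOpen_iUnion fun σ' => isOpen_iUnion fun _ => cell_open w b σ'
    by_contra hnot
    obtain ⟨y, hyC, hyu⟩ := Set.not_subset.1 hnot
    have hCU : connectedComponentIn U x ⊆ U := connectedComponentIn_subset _ _
    have hyU : y ∈ U := hCU hyC
    have hyv : y ∈ v := by
      rw [hv2]
      refine Set.mem_iUnion.2 ⟨fun i => decide (b i < dotL (w i) y), Set.mem_iUnion.2 ⟨?_, ?_⟩⟩
      · intro heq
        apply hyu
        rw [hu, ← heq]
        exact mem_own_cell w b hyU
      · exact mem_own_cell w b hyU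
    have hsub : connectedComponentIn U x ⊆ u ∪ v := by
      intro z hz
      have hzU : z ∈ U := hCU hz
      by_cases hzz : (fun i => decide (b i < dotL (w i) z)) = σx
      · left; rw [hu, ← hzz]; exact mem_own_cell w b hzU
      · right
        exact Set.mem_iUnion.2 ⟨_, Set.mem_iUnion.2 ⟨hzz, mem_own_cell w b hzU⟩⟩
    have hpre : IsPreconnected (connectedComponentIn U x) := isPreconnected_connectedComponentIn
    obtain ⟨z, hz⟩ := hpre u v hOu hOv hsub
      ⟨x, mem_connectedComponentIn hx, hxc⟩ ⟨y, hyC, hyv⟩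
    obtain ⟨-, hzu, hzv⟩ := hz
    obtain ⟨σ', hσ'⟩ := Set.mem_iUnion.1 hzv
    obtain ⟨hne, hzc⟩ := Set.mem_iUnion.1 hσ'
    exact hne (mem_cell_unique hzc hzu)
  · exact (cell_convex (fun i => dotL (w i)) b σx).isPreconnected.subset_connectedComponentIn
      hxc (cell_subset_U w b σx)

lemma regions_eq_image {n m : ℕ} (w : Fin m → Fin n → ℝ) (b : Fin m → ℝ) :
    ArrRegions w b
      = (fun σ => cellV (fun i => dotL (w i)) b σ) '' (Rset (fun i => dotL (w i)) b) := by
  ext C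
  constructor
  · rintro ⟨x, hx, rfl⟩
    exact ⟨fun i => decide (b i < dotL (w i) x), ⟨x, mem_own_cell w b hx⟩,
      (component_eq_cell w b hx).symm⟩
  · rintro ⟨σ, ⟨x, hxσ⟩, rfl⟩
    have hxU : x ∈ (⋃ i, Hyperplane (w i) (b i))ᶜ := cell_subset_U w b σ hxσ
    refine ⟨x, hxU, ?_⟩
    have hσ : σ = fun i => decide (b i < dotL (w i) x) :=
      mem_cell_unique hxσ (mem_own_cell w b hxU)
    show cellV (fun i => dotL (w i)) b σ = _
    rw [component_eq_cell w b hxU, ← hσ]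

lemma regions_ncard {n m : ℕ} (w : Fin m → Fin n → ℝ) (b : Fin m → ℝ) :
    (ArrRegions w b).Finite ∧ (ArrRegions w b).ncard = NC (fun i => dotL (w i)) b := by
  rw [regions_eq_image]
  constructor
  · exact (Set.toFinite _).image _
  · apply Set.ncard_image_of_injOn
    intro σ hσ τ hτ he
    obtain ⟨x, hx⟩ := hσ
    have he' : cellV (fun i => dotL (w i)) b σ = cellV (fun i => dotL (w i)) b τ := he
    have hx' : x ∈ cellV (fun i => dotL (w i)) b τ := by rw [← he']; exact hx
    exact mem_cell_unique hx hx'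

lemma AGP_of_GP {n m : ℕ} {w : Fin m → Fin n → ℝ} {b : Fin m → ℝ}
    (hGP : GeneralPosition w b) : AGP n (fun i => dotL (w i)) b := by
  constructor
  · intro S hS
    obtain ⟨hLI, hne⟩ := hGP.1 S hS
    constructor
    · intro c hc i hi
      have hdot : ∀ (u : Fin n → ℝ) (k : Fin n), dotL u (Pi.single k 1) = u k := by
        intro u k
        rw [dotL_apply]
        simp [Pi.single_apply]
      have hvec : ∑ i ∈ S, c i • w i = 0 := by
        funext k
        have h2 : (∑ i ∈ S, c i • dotL (w i)) (Pi.single k 1) = 0 := by rw [hc]; rfl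
        rw [LinearMap.sum_apply] at h2
        have h3 : ∑ i ∈ S, c i * w i k = 0 := by
          rw [← h2]
          refine Finset.sum_congr rfl fun i _ => ?_
          rw [LinearMap.smul_apply, smul_eq_mul, hdot]
        show (∑ i ∈ S, c i • w i) k = (0 : Fin n → ℝ) k
        rw [Finset.sum_apply]
        simpa using h3
      have hLI' := Fintype.linearIndependent_iff.1 hLI (fun j : S => c j)
      have hsum : ∑ j : S, c (j : Fin m) • w (j : Fin m) = 0 := by
        rw [Finset.univ_eq_attach, Finset.sum_attach S (fun j => c j • w j)]
        exact hvec
      exact hLI' hsum ⟨i, hi⟩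
    · obtain ⟨x, hx⟩ := hne
      exact ⟨x, fun i hi => Set.mem_iInter₂.1 hx i hi⟩
  · intro S hcard x
    by_contra hcon
    push_neg at hcon
    have hx : x ∈ ⋂ i ∈ S, Hyperplane (w i) (b i) :=
      Set.mem_iInter₂.2 fun i hi => hcon i hi
    rw [hGP.2 S hcard] at hx
    exact hx

/-- Zaslavsky's bound: an arrangement of `m` hyperplanes in `ℝⁿ` has at most
`∑_{j=0}^n C(m,j)` regions, with equality when the hyperplanes are in general position. -/
theorem zaslavsky_bound {n m : ℕ} (w : Fin m → Fin n → ℝ) (b : Fin m → ℝ)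
    (hw : ∀ i, w i ≠ 0) :
    ((ArrRegions w b).Finite ∧
      (ArrRegions w b).ncard ≤ ∑ j ∈ range (n + 1), m.choose j) ∧
    (GeneralPosition w b →
      (ArrRegions w b).ncard = ∑ j ∈ range (n + 1), m.choose j) := by
  obtain ⟨hfin, hcard⟩ := regions_ncard w b
  have hrk : Module.finrank ℝ (Fin n → ℝ) = n := by
    rw [Module.finrank_pi]
    simp
  refine ⟨⟨hfin, ?_⟩, fun hGP => ?_⟩
  · rw [hcard]
    exact Zas.upper m n (Fin n → ℝ) hrk.le (fun i => dotL (w i)) b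
  · rw [hcard]
    exact Zas.equal m n (Fin n → ℝ) hrk (fun i => dotL (w i)) b (AGP_of_GP hGP)
end

section
/- A single maxout layer with n inputs and m rank-k maxout units computes functions with at most min{ Σ_{j=0}^{n} C(k²m, j), k^m } linear regions. -/
open Finset
open Module

lemma pascal_sum (N n : ℕ) :
    ∑ j ∈ range (n+2), N.choose j + ∑ j ∈ range (n+1), N.choose j
      = ∑ j ∈ range (n+2), (N+1).choose j := by
  rw [Finset.sum_range_succ' (fun j => N.choose j) (n+1),
      Finset.sum_range_succ' (fun j => (N+1).choose j) (n+1)]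
  simp only [Nat.choose_succ_succ, Nat.succ_eq_add_one, Nat.choose_zero_right, Finset.sum_add_distrib]
  omega

-- affine map from ker to V
noncomputable def kerEmb {V : Type} [AddCommGroup V] [Module ℝ V]
    (L : V →ₗ[ℝ] ℝ) (x₀ : V) : (↥(LinearMap.ker L)) →ᵃ[ℝ] V where
  toFun := fun w => x₀ + w
  linear := (LinearMap.ker L).subtype
  map_vadd' := by
    intro p v
    show x₀ + ↑(v + p) = ↑v + (x₀ + ↑p)
    push_cast
    abel

lemma affine_apply (V : Type) [AddCommGroup V] [Module ℝ V] (g : V →ᵃ[ℝ] ℝ) (x : V) :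
    g x = g.linear x + g 0 := by
  conv_lhs => rw [AffineMap.decomp g]
  simp

lemma seg_pos {p q t : ℝ} (hp : 0 < p) (hq : 0 < q) (h0 : 0 ≤ t) (h1 : t ≤ 1) :
    0 < t * (p - q) + q := by
  rcases eq_or_lt_of_le h0 with h | h
  · rw [← h]; simpa using hq
  · nlinarith [mul_pos h hp, mul_nonneg (sub_nonneg.mpr h1) hq.le]

lemma seg_nonpos {p q t : ℝ} (hp : p ≤ 0) (hq : q ≤ 0) (h0 : 0 ≤ t) (h1 : t ≤ 1) :
    t * (p - q) + q ≤ 0 := by nlinarith [mul_nonpos_of_nonneg_of_nonpos h0 hp, mul_nonpos_of_nonneg_of_nonpos (sub_nonneg.mpr h1) hq]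

def Pat {V : Type} [AddCommGroup V] [Module ℝ V] {N : ℕ}
    (h : Fin N → (V →ᵃ[ℝ] ℝ)) : Set (Fin N → Bool) :=
  {σ | ∃ x : V, ∀ l, σ l = decide (0 < h l x)}

set_option maxHeartbeats 1000000 in
lemma pat_ncard_le : ∀ (n : ℕ) (V : Type) [AddCommGroup V] [Module ℝ V]
    [FiniteDimensional ℝ V] (N : ℕ) (h : Fin N → (V →ᵃ[ℝ] ℝ)),
    finrank ℝ V ≤ n → (Pat h).ncard ≤ ∑ j ∈ range (n+1), N.choose j := by
  intro n
  induction n with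
  | zero =>
    intro V _ _ _ N h hdim
    have hsub : Subsingleton V := by
      rw [← finrank_zero_iff (R := ℝ)]; omega
    have hs : Pat h ⊆ {fun l => decide (0 < h l 0)} := by
      rintro σ ⟨x, hx⟩
      have : x = 0 := Subsingleton.elim x 0
      subst this
      simp only [Set.mem_singleton_iff]
      funext l; exact hx l
    calc (Pat h).ncard ≤ ({fun l => decide (0 < h l 0)} : Set (Fin N → Bool)).ncard :=
          Set.ncard_le_ncard hs (Set.toFinite _)
      _ = 1 := Set.ncard_singleton _
      _ ≤ _ := by simp
  | succ n IH =>
    intro V _ _ _ N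
    induction N with
    | zero =>
      intro h hdim
      calc (Pat h).ncard ≤ (Set.univ : Set (Fin 0 → Bool)).ncard :=
            Set.ncard_le_ncard (Set.subset_univ _) (Set.toFinite _)
        _ = 1 := by rw [Set.ncard_univ]; simp
        _ ≤ _ := by
            refine le_trans ?_ (Finset.single_le_sum (f := fun j => Nat.choose 0 j)
              (fun i _ => Nat.zero_le _) (Finset.mem_range.mpr (Nat.succ_pos _)))
            simp
    | succ N IHN =>
      intro h hdim
      set h' : Fin N → (V →ᵃ[ℝ] ℝ) := fun l => h l.castSucc with hh'
      set r : (Fin (N+1) → Bool) → (Fin N → Bool) := fun σ l => σ l.castSucc with hr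
      have hrmem : ∀ σ ∈ Pat h, r σ ∈ Pat h' := by
        rintro σ ⟨x, hx⟩; exact ⟨x, fun l => hx l.castSucc⟩
      by_cases hL : (h (Fin.last N)).linear = 0
      · -- last function is constant; restriction is injective on Pat h
        have hconst : ∀ x : V, h (Fin.last N) x = h (Fin.last N) 0 := by
          intro x; rw [affine_apply, hL]; simp
        have hinj : Set.InjOn r (Pat h) := by
          rintro σ ⟨x, hx⟩ τ ⟨y, hy⟩ hrst
          funext l
          refine Fin.lastCases ?_ (fun i => ?_) l
          · rw [hx, hy, hconst x, hconst y]
          · exact congrFun hrst i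
        calc (Pat h).ncard ≤ (Pat h').ncard :=
              Set.ncard_le_ncard_of_injOn r hrmem hinj (Set.toFinite _)
          _ ≤ ∑ j ∈ range (n+2), N.choose j := IHN h' hdim
          _ ≤ ∑ j ∈ range (n+2), (N+1).choose j :=
              Finset.sum_le_sum fun j _ => Nat.choose_le_choose j (Nat.le_succ N)
      · -- last function has nonzero linear part
        set L := (h (Fin.last N)).linear with hLdef
        obtain ⟨v, hv⟩ : ∃ v, L v ≠ 0 := by
          by_contra hc
          push_neg at hc
          exact hL (LinearMap.ext fun v => hc v)
        set x₀ : V := (-(h (Fin.last N) 0) / L v) • v with hx₀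
        have hx₀0 : h (Fin.last N) x₀ = 0 := by
          rw [affine_apply]
          show L x₀ + _ = 0
          rw [hx₀, map_smul, smul_eq_mul, div_mul_cancel₀ _ hv]
          ring
        -- the restricted family on the kernel hyperplane
        set W := LinearMap.ker L with hW
        set g : Fin N → ((↥W) →ᵃ[ℝ] ℝ) := fun l => (h' l).comp (kerEmb L x₀) with hg
        have hWdim : finrank ℝ (↥W) ≤ n := by
          rw [hW]
          have := LinearMap.finrank_range_add_finrank_ker L
          have hrange : 0 < finrank ℝ ↥(LinearMap.range L) := by
            have : Nontrivial ↥(LinearMap.range L) := by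
              rw [Submodule.nontrivial_iff_ne_bot, ne_eq, LinearMap.range_eq_bot]
              intro h0
              exact hv (by rw [h0]; rfl)
            exact finrank_pos
          omega
        -- split Pat h by the last coordinate
        set Pt := {σ ∈ Pat h | σ (Fin.last N) = true} with hPt
        set Pf := {σ ∈ Pat h | σ (Fin.last N) = false} with hPf
        have hcover : Pat h = Pt ∪ Pf := by
          ext σ
          simp only [hPt, hPf, Set.mem_union, Set.mem_setOf_eq]
          rcases Bool.eq_false_or_eq_true (σ (Fin.last N)) with hb | hb <;> tauto
        have hinjt : ∀ (b : Bool), Set.InjOn r {σ ∈ Pat h | σ (Fin.last N) = b} := by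
          intro b σ hσ τ hτ hrst
          funext l
          refine Fin.lastCases ?_ (fun i => ?_) l
          · rw [hσ.2, hτ.2]
          · exact congrFun hrst i
        -- doubly realized patterns lie in Pat g
        have hD : (r '' Pt) ∩ (r '' Pf) ⊆ Pat g := by
          rintro σ' ⟨⟨σp, ⟨⟨xp, hxp⟩, hlp⟩, hep⟩, ⟨σm, ⟨⟨xm, hxm⟩, hlm⟩, hem⟩⟩
          have hbp : 0 < h (Fin.last N) xp := by
            have := hxp (Fin.last N); rw [hlp] at this
            exact of_decide_eq_true this.symm
          have hbm : h (Fin.last N) xm ≤ 0 := by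
            have := hxm (Fin.last N); rw [hlm] at this
            exact le_of_not_gt (of_decide_eq_false this.symm)
          set a := h (Fin.last N) xm
          set b := h (Fin.last N) xp
          set t : ℝ := a / (a - b) with ht
          have hab : a - b < 0 := by linarith
          have hne : a - b ≠ 0 := ne_of_lt hab
          have ht0 : 0 ≤ t := by
            rw [ht, div_nonneg_iff]; right; constructor <;> linarith
          have ht1 : t ≤ 1 := by
            rw [ht, div_le_one_of_neg hab]; linarith
          set z : V := AffineMap.lineMap xm xp t with hz
          have key : t * (b - a) = -a := by
            rw [ht]
            field_simp
            ring
          have hlast : h (Fin.last N) z = 0 := by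
            rw [hz, AffineMap.apply_lineMap]
            show t • (b - a) + a = 0
            rw [smul_eq_mul, key]
            ring
          have hsig : ∀ l : Fin N, σ' l = decide (0 < h' l z) := by
            intro l
            have h1 : σ' l = decide (0 < h' l xp) := by
              rw [← hep]; exact hxp l.castSucc
            have h2 : σ' l = decide (0 < h' l xm) := by
              rw [← hem]; exact hxm l.castSucc
            have hzv : h' l z = t • (h' l xp - h' l xm) + h' l xm := by
              rw [hz, AffineMap.apply_lineMap]; rfl
            rcases Bool.eq_false_or_eq_true (σ' l) with hb' | hb'
            · -- both > 0
              rw [hb'] at h1 h2 ⊢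
              have hp : 0 < h' l xp := of_decide_eq_true h1.symm
              have hm : 0 < h' l xm := of_decide_eq_true h2.symm
              symm
              rw [decide_eq_true_eq, hzv, smul_eq_mul]
              exact seg_pos hp hm ht0 ht1
            · -- both ≤ 0
              rw [hb'] at h1 h2 ⊢
              have hp : ¬ (0 < h' l xp) := of_decide_eq_false h1.symm
              have hm : ¬ (0 < h' l xm) := of_decide_eq_false h2.symm
              push_neg at hp hm
              symm
              rw [decide_eq_false_iff_not]
              push_neg
              rw [hzv, smul_eq_mul]
              exact seg_nonpos hp hm ht0 ht1
          -- z lies on the hyperplane, so comes from the kernel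
          have hzker : z - x₀ ∈ W := by
            rw [hW, LinearMap.mem_ker]
            have e1 : h (Fin.last N) z = L z + h (Fin.last N) 0 := affine_apply V _ z
            have e2 : h (Fin.last N) x₀ = L x₀ + h (Fin.last N) 0 := affine_apply V _ x₀
            rw [hlast] at e1
            rw [hx₀0] at e2
            rw [map_sub]
            linarith
          refine ⟨⟨z - x₀, hzker⟩, fun l => ?_⟩
          have hφ : (kerEmb L x₀) ⟨z - x₀, hzker⟩ = z := by
            show x₀ + (z - x₀) = z
            abel
          rw [hg]
          simp only [AffineMap.comp_apply, hφ]
          exact hsig l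
        -- counting
        have e1 : Pt.ncard = (r '' Pt).ncard :=
          (Set.ncard_image_of_injOn (hinjt true)).symm
        have e2 : Pf.ncard = (r '' Pf).ncard :=
          (Set.ncard_image_of_injOn (hinjt false)).symm
        have e3 : (r '' Pt ∪ r '' Pf).ncard + (r '' Pt ∩ r '' Pf).ncard
            = (r '' Pt).ncard + (r '' Pf).ncard :=
          Set.ncard_union_add_ncard_inter _ _ (Set.toFinite _) (Set.toFinite _)
        have e4 : (r '' Pt ∪ r '' Pf).ncard ≤ (Pat h').ncard := by
          refine Set.ncard_le_ncard ?_ (Set.toFinite _)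
          rintro σ' (⟨σ, hσ, he⟩ | ⟨σ, hσ, he⟩) <;> [skip; skip] <;>
            · rw [← he]; exact hrmem σ hσ.1
        have e5 : (r '' Pt ∩ r '' Pf).ncard ≤ (Pat g).ncard :=
          Set.ncard_le_ncard hD (Set.toFinite _)
        have e6 : (Pat h).ncard ≤ Pt.ncard + Pf.ncard := by
          rw [hcover]; exact Set.ncard_union_le _ _
        have b1 : (Pat h').ncard ≤ ∑ j ∈ range (n+2), N.choose j := IHN h' hdim
        have b2 : (Pat g).ncard ≤ ∑ j ∈ range (n+1), N.choose j := IH (↥W) N g hWdim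
        calc (Pat h).ncard ≤ Pt.ncard + Pf.ncard := e6
          _ = (r '' Pt ∪ r '' Pf).ncard + (r '' Pt ∩ r '' Pf).ncard := by
              rw [e1, e2, e3]
          _ ≤ ∑ j ∈ range (n+2), N.choose j + ∑ j ∈ range (n+1), N.choose j := by
              exact Nat.add_le_add (le_trans e4 b1) (le_trans e5 b2)
          _ = ∑ j ∈ range (n+2), (N+1).choose j := pascal_sum N n


section Helpers

lemma affine_apply' {V : Type*} [AddCommGroup V] [Module ℝ V] {W : Type*} [AddCommGroup W]
    [Module ℝ W] (g : V →ᵃ[ℝ] W) (x : V) : g x = g.linear x + g 0 := by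
  conv_lhs => rw [AffineMap.decomp g]
  simp

/-- Two affine functions agreeing on a nonempty open set agree everywhere. -/
lemma affine_pair_agree {n : ℕ} {W : Type*} [AddCommGroup W] [Module ℝ W]
    (A₁ A₂ : (Fin n → ℝ) →ₗ[ℝ] W) (c₁ c₂ : W) (U : Set (Fin n → ℝ))
    (hU : IsOpen U) (hne : U.Nonempty)
    (hag : ∀ x ∈ U, A₁ x + c₁ = A₂ x + c₂) : ∀ x, A₁ x + c₁ = A₂ x + c₂ := by
  obtain ⟨x₀, hx₀⟩ := hne
  obtain ⟨ε, hε, hball⟩ := Metric.isOpen_iff.mp hU x₀ hx₀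
  have hlin : ∀ v, A₁ v = A₂ v := by
    intro v
    set t : ℝ := ε / (2 * (‖v‖ + 1)) with htdef
    have hvpos : (0:ℝ) < ‖v‖ + 1 := by positivity
    have ht : 0 < t := by positivity
    have hmem : x₀ + t • v ∈ U := by
      apply hball
      rw [Metric.mem_ball, dist_eq_norm]
      have h0 : x₀ + t • v - x₀ = t • v := by abel
      rw [h0, norm_smul, Real.norm_eq_abs, abs_of_pos ht]
      have h1 : t * ‖v‖ ≤ t * (‖v‖ + 1) := by nlinarith
      have h2 : t * (‖v‖ + 1) = ε / 2 := by rw [htdef]; field_simp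
      linarith
    have e1 := hag _ hmem
    have e0 := hag _ hx₀
    rw [map_add, map_add, map_smul, map_smul] at e1
    have h3 : A₁ x₀ + t • A₁ v + c₁ - (A₁ x₀ + c₁)
        = A₂ x₀ + t • A₂ v + c₂ - (A₂ x₀ + c₂) := by rw [e1, e0]
    have l1 : A₁ x₀ + t • A₁ v + c₁ - (A₁ x₀ + c₁) = t • A₁ v := by abel
    have l2 : A₂ x₀ + t • A₂ v + c₂ - (A₂ x₀ + c₂) = t • A₂ v := by abel
    rw [l1, l2] at h3
    have := congrArg (fun w => t⁻¹ • w) h3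
    simpa [smul_smul, inv_mul_cancel₀ (ne_of_gt ht)] using this
  have hc : c₁ = c₂ := by
    have e0 := hag _ hx₀
    rw [hlin x₀] at e0
    exact add_left_cancel e0
  intro x
  rw [hlin x, hc]

/-- The nonzero set of a not-identically-zero affine function is dense. -/
lemma dense_nonzero {n : ℕ} (g : (Fin n → ℝ) →ᵃ[ℝ] ℝ) (hg : ∃ y, g y ≠ 0) :
    Dense {x | g x ≠ 0} := by
  rw [dense_iff_inter_open]
  rintro U hU hUne
  by_contra hc
  rw [Set.not_nonempty_iff_eq_empty] at hc
  have hz : ∀ x ∈ U, g x = 0 := by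
    intro x hx
    by_contra hne
    have hmem : x ∈ U ∩ {x | g x ≠ 0} := ⟨hx, hne⟩
    rw [hc] at hmem
    exact hmem
  have hzero : ∀ x ∈ U, g.linear x + g 0 = (0 : (Fin n → ℝ) →ₗ[ℝ] ℝ) x + (0:ℝ) := by
    intro x hx
    have hx0 := hz x hx
    rw [affine_apply'] at hx0
    simpa using hx0
  have hall := affine_pair_agree g.linear 0 (g 0) 0 U hU hUne hzero
  obtain ⟨y, hy⟩ := hg
  apply hy
  have hy0 := hall y
  simp only [LinearMap.zero_apply, add_zero] at hy0
  rw [affine_apply']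
  exact hy0

/-- A generic point in a nonempty open set avoiding the zero sets of all relevant
affine functions in a finite family. -/
lemma exists_generic {n : ℕ} {ι : Type*} [Finite ι] (h : ι → ((Fin n → ℝ) →ᵃ[ℝ] ℝ))
    (U : Set (Fin n → ℝ)) (hU : IsOpen U) (hne : U.Nonempty) :
    ∃ x ∈ U, ∀ l, (∃ y, h l y ≠ 0) → h l x ≠ 0 := by
  set S : ι → Set (Fin n → ℝ) := fun l => {x | (∃ y, h l y ≠ 0) → h l x ≠ 0} with hS
  have hcase : ∀ l, (∃ y, h l y ≠ 0) → S l = {x | h l x ≠ 0} := by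
    intro l hl
    ext x
    exact ⟨fun H => H hl, fun H _ => H⟩
  have hcase' : ∀ l, ¬ (∃ y, h l y ≠ 0) → S l = Set.univ := by
    intro l hl
    ext x
    exact ⟨fun _ => trivial, fun _ hy => absurd hy hl⟩
  have hopen : ∀ l, IsOpen (S l) := by
    intro l
    by_cases hl : ∃ y, h l y ≠ 0
    · rw [hcase l hl]
      exact (isClosed_eq (h l).continuous_of_finiteDimensional continuous_const).isOpen_compl
    · rw [hcase' l hl]; exact isOpen_univ
  have hdense : ∀ l, Dense (S l) := by
    intro l
    by_cases hl : ∃ y, h l y ≠ 0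
    · rw [hcase l hl]; exact dense_nonzero _ hl
    · rw [hcase' l hl]; exact dense_univ
  have hD : Dense (⋂ l, S l) := dense_iInter_of_isOpen hopen hdense
  obtain ⟨x, hxU, hxD⟩ := hD.inter_open_nonempty U hU hne
  exact ⟨x, hxU, fun l => Set.mem_iInter.mp hxD l⟩

end Helpers

/-- `F` agrees with an affine map on the set `R`. -/
def AffineOn {n m : ℕ} (F : (Fin n → ℝ) → (Fin m → ℝ)) (R : Set (Fin n → ℝ)) : Prop :=
  ∃ (A : (Fin n → ℝ) →ₗ[ℝ] (Fin m → ℝ)) (c : Fin m → ℝ), ∀ x ∈ R, F x = A x + c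

/-- A linear region of `F`: a maximal connected open set on which `F` is affine. -/
def IsLinearRegion {n m : ℕ} (F : (Fin n → ℝ) → (Fin m → ℝ)) (R : Set (Fin n → ℝ)) : Prop :=
  IsOpen R ∧ IsConnected R ∧ AffineOn F R ∧
    ∀ R', R ⊆ R' → IsOpen R' → IsConnected R' → AffineOn F R' → R' = R

/-- The function computed by a maxout layer with `m` rank-`k` units: unit `j` outputs the
maximum of its `k` affine pre-activations. -/
noncomputable def maxoutLayer {n m k : ℕ} (hk : 0 < k)
    (f : Fin m → Fin k → ((Fin n → ℝ) →ᵃ[ℝ] ℝ)) : (Fin n → ℝ) → (Fin m → ℝ) :=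
  fun x j => Finset.univ.sup' (Finset.univ_nonempty_iff.mpr ⟨⟨0, hk⟩⟩) fun i => f j i x

section Regions

variable {n m k : ℕ}

lemma convex_pos_aff {n : ℕ} (g : (Fin n → ℝ) →ᵃ[ℝ] ℝ) : Convex ℝ {x | 0 < g x} := by
  have he : {x | 0 < g x} = {x | -(g 0) < g.linear x} := by
    ext x
    rw [Set.mem_setOf_eq, Set.mem_setOf_eq, affine_apply']
    constructor <;> intro <;> linarith
  rw [he]
  exact convex_halfSpace_gt g.linear.isLinear _

lemma convex_neg_aff {n : ℕ} (g : (Fin n → ℝ) →ᵃ[ℝ] ℝ) : Convex ℝ {x | g x < 0} := by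
  have he : {x | g x < 0} = {x | g.linear x < -(g 0)} := by
    ext x
    rw [Set.mem_setOf_eq, Set.mem_setOf_eq, affine_apply']
    constructor <;> intro <;> linarith
  rw [he]
  exact convex_halfSpace_lt g.linear.isLinear _

lemma convex_nonneg_aff {n : ℕ} (g : (Fin n → ℝ) →ᵃ[ℝ] ℝ) : Convex ℝ {x | 0 ≤ g x} := by
  have he : {x | 0 ≤ g x} = {x | -(g 0) ≤ g.linear x} := by
    ext x
    rw [Set.mem_setOf_eq, Set.mem_setOf_eq, affine_apply']
    constructor <;> intro <;> linarith
  rw [he]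
  exact convex_halfSpace_ge g.linear.isLinear _

/-- The pairwise differences of the pre-activations. -/
noncomputable def diffs (f : Fin m → Fin k → ((Fin n → ℝ) →ᵃ[ℝ] ℝ)) :
    (Fin m × Fin k × Fin k) → ((Fin n → ℝ) →ᵃ[ℝ] ℝ) :=
  fun p => f p.1 p.2.1 - f p.1 p.2.2

lemma diffs_apply (f : Fin m → Fin k → ((Fin n → ℝ) →ᵃ[ℝ] ℝ)) (p) (x) :
    diffs f p x = f p.1 p.2.1 x - f p.1 p.2.2 x := by
  show (f p.1 p.2.1 - f p.1 p.2.2) x = _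
  rw [AffineMap.coe_sub, Pi.sub_apply]

/-- The open "same strict sign pattern as at `x`" cell. -/
def cell (f : Fin m → Fin k → ((Fin n → ℝ) →ᵃ[ℝ] ℝ)) (x : Fin n → ℝ) : Set (Fin n → ℝ) :=
  ⋂ p, {x' | (∃ y, diffs f p y ≠ 0) → 0 < diffs f p x * diffs f p x'}

lemma cell_isOpen (f : Fin m → Fin k → ((Fin n → ℝ) →ᵃ[ℝ] ℝ)) (x) : IsOpen (cell f x) := by
  refine isOpen_iInter_of_finite fun p => ?_
  by_cases hp : ∃ y, diffs f p y ≠ 0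
  · have he : {x' | (∃ y, diffs f p y ≠ 0) → 0 < diffs f p x * diffs f p x'}
        = {x' | 0 < diffs f p x * diffs f p x'} := by
      ext x'; exact ⟨fun H => H hp, fun H _ => H⟩
    rw [he]
    exact isOpen_lt continuous_const
      (continuous_const.mul (diffs f p).continuous_of_finiteDimensional)
  · have he : {x' | (∃ y, diffs f p y ≠ 0) → 0 < diffs f p x * diffs f p x'} = Set.univ := by
      ext x'; exact ⟨fun _ => trivial, fun _ hy => absurd hy hp⟩
    rw [he]; exact isOpen_univ

lemma cell_convex (f : Fin m → Fin k → ((Fin n → ℝ) →ᵃ[ℝ] ℝ)) {x}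
    (hgen : ∀ p, (∃ y, diffs f p y ≠ 0) → diffs f p x ≠ 0) : Convex ℝ (cell f x) := by
  refine convex_iInter fun p => ?_
  by_cases hp : ∃ y, diffs f p y ≠ 0
  · have he0 : {x' | (∃ y, diffs f p y ≠ 0) → 0 < diffs f p x * diffs f p x'}
        = {x' | 0 < diffs f p x * diffs f p x'} := by
      ext x'; exact ⟨fun H => H hp, fun H _ => H⟩
    rw [he0]
    rcases lt_or_gt_of_ne (hgen p hp) with hc | hc
    · have he : {x' | 0 < diffs f p x * diffs f p x'} = {x' | diffs f p x' < 0} := by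
        ext x'
        rw [Set.mem_setOf_eq, Set.mem_setOf_eq]
        constructor <;> intro hh <;> nlinarith
      rw [he]; exact convex_neg_aff _
    · have he : {x' | 0 < diffs f p x * diffs f p x'} = {x' | 0 < diffs f p x'} := by
        ext x'
        rw [Set.mem_setOf_eq, Set.mem_setOf_eq]
        constructor <;> intro hh <;> nlinarith
      rw [he]; exact convex_pos_aff _
  · have he : {x' | (∃ y, diffs f p y ≠ 0) → 0 < diffs f p x * diffs f p x'} = Set.univ := by
      ext x'; exact ⟨fun _ => trivial, fun _ hy => absurd hy hp⟩
    rw [he]; exact convex_univ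

lemma mem_cell_self (f : Fin m → Fin k → ((Fin n → ℝ) →ᵃ[ℝ] ℝ)) {x}
    (hgen : ∀ p, (∃ y, diffs f p y ≠ 0) → diffs f p x ≠ 0) : x ∈ cell f x := by
  refine Set.mem_iInter.mpr fun p hp => ?_
  exact mul_self_pos.mpr (hgen p hp)

/-- The key structural lemma about a linear region around a generic point. -/
lemma region_engine (hk : 0 < k) (f : Fin m → Fin k → ((Fin n → ℝ) →ᵃ[ℝ] ℝ))
    {R : Set (Fin n → ℝ)} (hR : IsLinearRegion (maxoutLayer hk f) R)
    {x : Fin n → ℝ} (hx : x ∈ R)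
    (hgen : ∀ p, (∃ y, diffs f p y ≠ 0) → diffs f p x ≠ 0) :
    ∃ i : Fin m → Fin k,
      (∀ x' ∈ R, ∀ j b, f j b x' ≤ f j (i j) x') ∧ cell f x ⊆ R := by
  have hne : (Finset.univ : Finset (Fin k)).Nonempty := Finset.univ_nonempty_iff.mpr ⟨⟨0, hk⟩⟩
  -- choose argmax indices at x
  have hex : ∀ j : Fin m, ∃ a : Fin k, ∀ b : Fin k, f j b x ≤ f j a x := by
    intro j
    obtain ⟨a, _, ha⟩ := Finset.exists_mem_eq_sup' hne (fun b => f j b x)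
    exact ⟨a, fun b => ha ▸ Finset.le_sup' (fun b => f j b x) (Finset.mem_univ b)⟩
  choose i hi using hex
  -- on the cell, unit j is given by f j (i j)
  have hcell_max : ∀ x' ∈ cell f x, ∀ j b, f j b x' ≤ f j (i j) x' := by
    intro x' hx' j b
    set p : Fin m × Fin k × Fin k := (j, i j, b) with hp
    by_cases hrel : ∃ y, diffs f p y ≠ 0
    · have h1 : diffs f p x ≠ 0 := hgen p hrel
      have h2 : 0 ≤ diffs f p x := by rw [diffs_apply]; simpa using sub_nonneg.mpr (hi j b)
      have h3 : 0 < diffs f p x := lt_of_le_of_ne h2 (Ne.symm h1)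
      have h4 : 0 < diffs f p x * diffs f p x' := (Set.mem_iInter.mp hx' p) hrel
      have h5 : 0 < diffs f p x' := by nlinarith
      rw [diffs_apply] at h5
      simp only [hp] at h5
      linarith
    · push_neg at hrel
      have := hrel x'
      rw [diffs_apply] at this
      simp only [hp] at this
      linarith
  -- the affine map on the cell
  set AG : (Fin n → ℝ) →ₗ[ℝ] (Fin m → ℝ) := LinearMap.pi (fun j => (f j (i j)).linear) with hAG
  set cG : Fin m → ℝ := fun j => f j (i j) 0 with hcG
  have hFC : ∀ x' ∈ cell f x, maxoutLayer hk f x' = AG x' + cG := by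
    intro x' hx'
    funext j
    have h1 : maxoutLayer hk f x' j = f j (i j) x' := by
      refine le_antisymm ?_ ?_
      · exact Finset.sup'_le hne _ fun b _ => hcell_max x' hx' j b
      · exact Finset.le_sup' (fun b => f j b x') (Finset.mem_univ (i j))
    rw [Pi.add_apply, h1, affine_apply']
    simp [hAG, hcG, LinearMap.pi_apply]
  -- the cell is open, connected, nonempty
  have hxC : x ∈ cell f x := mem_cell_self f hgen
  have hCopen : IsOpen (cell f x) := cell_isOpen f x
  have hCconn : IsConnected (cell f x) :=
    ⟨⟨x, hxC⟩, (cell_convex f hgen).isPreconnected⟩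
  -- extract the affine data of R
  obtain ⟨A, c, hAc⟩ := hR.2.2.1
  -- the two affine maps agree on R ∩ cell
  have hagree : ∀ z, A z + c = AG z + cG := by
    refine affine_pair_agree A AG c cG (R ∩ cell f x) (hR.1.inter hCopen) ⟨x, hx, hxC⟩ ?_
    intro z hz
    rw [← hAc z hz.1, hFC z hz.2]
  -- the union R ∪ cell is a bigger region, so cell ⊆ R by maximality
  have hAff : AffineOn (maxoutLayer hk f) (R ∪ cell f x) := by
    refine ⟨A, c, fun z hz => ?_⟩
    rcases hz with hz | hz
    · exact hAc z hz
    · rw [hFC z hz, hagree z]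
  have hmaxi := hR.2.2.2 (R ∪ cell f x) Set.subset_union_left (hR.1.union hCopen)
    (IsConnected.union ⟨x, hx, hxC⟩ hR.2.1 hCconn) hAff
  have hCsub : cell f x ⊆ R := by
    intro z hz
    rw [← hmaxi]
    exact Set.mem_union_right R hz
  refine ⟨i, ?_, hCsub⟩
  intro x' hx' j b
  have hFx' : maxoutLayer hk f x' = AG x' + cG := by rw [hAc x' hx']; exact hagree x'
  have h1 : maxoutLayer hk f x' j = f j (i j) x' := by
    rw [hFx', Pi.add_apply]
    rw [affine_apply' (f j (i j)) x']
    simp [hAG, hcG, LinearMap.pi_apply]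
  have h2 : f j b x' ≤ maxoutLayer hk f x' j :=
    Finset.le_sup' (fun b => f j b x') (Finset.mem_univ b)
  rw [h1] at h2
  exact h2

end Regions

section Main

variable {n m k : ℕ}

/-- Two linear regions that intersect are equal. -/
lemma regions_eq_of_inter {F : (Fin n → ℝ) → (Fin m → ℝ)} {R₁ R₂ : Set (Fin n → ℝ)}
    (h1 : IsLinearRegion F R₁) (h2 : IsLinearRegion F R₂) (hne : (R₁ ∩ R₂).Nonempty) :
    R₁ = R₂ := by
  obtain ⟨A₁, c₁, e₁⟩ := h1.2.2.1
  obtain ⟨A₂, c₂, e₂⟩ := h2.2.2.1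
  have hag : ∀ z, A₁ z + c₁ = A₂ z + c₂ :=
    affine_pair_agree _ _ _ _ (R₁ ∩ R₂) (h1.1.inter h2.1) hne
      (fun z hz => by rw [← e₁ z hz.1, ← e₂ z hz.2])
  have hAff : AffineOn F (R₁ ∪ R₂) := by
    refine ⟨A₁, c₁, fun z hz => ?_⟩
    rcases hz with hz | hz
    · exact e₁ z hz
    · rw [e₂ z hz, ← hag z]
  have u1 := h1.2.2.2 (R₁ ∪ R₂) Set.subset_union_left (h1.1.union h2.1)
    (IsConnected.union hne h1.2.1 h2.2.1) hAff
  have u2 := h2.2.2.2 (R₁ ∪ R₂) Set.subset_union_right (h1.1.union h2.1)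
    (IsConnected.union hne h1.2.1 h2.2.1) hAff
  exact u1.symm.trans u2

/-- Two linear regions with a common global argmax pattern are equal. -/
lemma regions_eq_of_argmax (hk : 0 < k) (f : Fin m → Fin k → ((Fin n → ℝ) →ᵃ[ℝ] ℝ))
    {R₁ R₂ : Set (Fin n → ℝ)}
    (h1 : IsLinearRegion (maxoutLayer hk f) R₁) (h2 : IsLinearRegion (maxoutLayer hk f) R₂)
    (i : Fin m → Fin k)
    (hm1 : ∀ x' ∈ R₁, ∀ j b, f j b x' ≤ f j (i j) x')
    (hm2 : ∀ x' ∈ R₂, ∀ j b, f j b x' ≤ f j (i j) x') : R₁ = R₂ := by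
  have hne : (Finset.univ : Finset (Fin k)).Nonempty := Finset.univ_nonempty_iff.mpr ⟨⟨0, hk⟩⟩
  set Ci : Set (Fin n → ℝ) :=
    ⋂ (j : Fin m), ⋂ (b : Fin k), {x' | 0 ≤ (f j (i j) - f j b) x'} with hCi
  have hconv : Convex ℝ Ci := convex_iInter fun j => convex_iInter fun b => convex_nonneg_aff _
  have hRsub : ∀ (R : Set (Fin n → ℝ)), (∀ x' ∈ R, ∀ j b, f j b x' ≤ f j (i j) x') → R ⊆ Ci := by
    intro R hmR z hz
    refine Set.mem_iInter.mpr fun j => Set.mem_iInter.mpr fun b => ?_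
    rw [Set.mem_setOf_eq, AffineMap.coe_sub, Pi.sub_apply]
    exact sub_nonneg.mpr (hmR z hz j b)
  set AG : (Fin n → ℝ) →ₗ[ℝ] (Fin m → ℝ) := LinearMap.pi (fun j => (f j (i j)).linear) with hAG
  set cG : Fin m → ℝ := fun j => f j (i j) 0 with hcG
  have hGC : ∀ x' ∈ Ci, maxoutLayer hk f x' = AG x' + cG := by
    intro x' hx'
    funext j
    have hb : ∀ b : Fin k, f j b x' ≤ f j (i j) x' := by
      intro b
      have := Set.mem_iInter.mp (Set.mem_iInter.mp hx' j) b
      rw [Set.mem_setOf_eq, AffineMap.coe_sub, Pi.sub_apply] at this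
      linarith
    have h1' : maxoutLayer hk f x' j = f j (i j) x' := by
      refine le_antisymm ?_ ?_
      · exact Finset.sup'_le hne _ fun b _ => hb b
      · exact Finset.le_sup' (fun b => f j b x') (Finset.mem_univ (i j))
    rw [Pi.add_apply, h1', affine_apply']
    simp [hAG, hcG, LinearMap.pi_apply]
  have hint1 : R₁ ⊆ interior Ci := (h1.1.subset_interior_iff).mpr (hRsub R₁ hm1)
  have hint2 : R₂ ⊆ interior Ci := (h2.1.subset_interior_iff).mpr (hRsub R₂ hm2)
  obtain ⟨z₁, hz₁⟩ := h1.2.1.1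
  have hconn : IsConnected (interior Ci) :=
    ⟨⟨z₁, hint1 hz₁⟩, (hconv.interior).isPreconnected⟩
  have hAff : AffineOn (maxoutLayer hk f) (interior Ci) :=
    ⟨AG, cG, fun z hz => hGC z (interior_subset hz)⟩
  have u1 := h1.2.2.2 (interior Ci) hint1 isOpen_interior hconn hAff
  have u2 := h2.2.2.2 (interior Ci) hint2 isOpen_interior hconn hAff
  rw [← u1, ← u2]

end Main

/-- A single maxout layer with `n` inputs and `m` rank-`k` maxout units computes functions
with at most `min { ∑_{j=0}^n C(k²m, j), k^m }` linear regions. -/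
theorem maxout_layer_upper_bound (n m k : ℕ) (hk : 0 < k)
    (f : Fin m → Fin k → ((Fin n → ℝ) →ᵃ[ℝ] ℝ)) :
    {R | IsLinearRegion (maxoutLayer hk f) R}.Finite ∧
    {R | IsLinearRegion (maxoutLayer hk f) R}.ncard ≤
      min (∑ j ∈ range (n + 1), (k ^ 2 * m).choose j) (k ^ m) := by
  classical
  set S := {R | IsLinearRegion (maxoutLayer hk f) R} with hS
  have hkey : ∀ R, ∃ (x : Fin n → ℝ) (i : Fin m → Fin k), R ∈ S →
      x ∈ R ∧ (∀ p, (∃ y, diffs f p y ≠ 0) → diffs f p x ≠ 0) ∧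
      (∀ x' ∈ R, ∀ j b, f j b x' ≤ f j (i j) x') ∧ cell f x ⊆ R := by
    intro R
    by_cases hR : R ∈ S
    · obtain ⟨x, hx, hgenx⟩ := exists_generic (diffs f) R hR.1 hR.2.1.1
      obtain ⟨i, hmaxi, hsubi⟩ := region_engine hk f hR hx hgenx
      exact ⟨x, i, fun _ => ⟨hx, hgenx, hmaxi, hsubi⟩⟩
    · exact ⟨0, fun _ => ⟨0, hk⟩, fun hR' => absurd hR' hR⟩
  choose xof iof hprop using hkey
  have hmem : ∀ R ∈ S, xof R ∈ R := fun R hR => (hprop R hR).1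
  have hgen : ∀ R ∈ S, ∀ p, (∃ y, diffs f p y ≠ 0) → diffs f p (xof R) ≠ 0 :=
    fun R hR => (hprop R hR).2.1
  have hmax : ∀ R ∈ S, ∀ x' ∈ R, ∀ j b, f j b x' ≤ f j (iof R j) x' :=
    fun R hR => (hprop R hR).2.2.1
  have hsub : ∀ R ∈ S, cell f (xof R) ⊆ R := fun R hR => (hprop R hR).2.2.2
  have hcard : Fintype.card (Fin m × Fin k × Fin k) = k ^ 2 * m := by simp; ring
  set e : (Fin m × Fin k × Fin k) ≃ Fin (k ^ 2 * m) := Fintype.equivFinOfCardEq hcard with he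
  set h : Fin (k ^ 2 * m) → ((Fin n → ℝ) →ᵃ[ℝ] ℝ) := fun l => diffs f (e.symm l) with hh
  set σmap : Set (Fin n → ℝ) → (Fin (k ^ 2 * m) → Bool) :=
    fun R l => decide (0 < h l (xof R)) with hσ
  -- injectivity of the sign-pattern map
  have hinjσ : Set.InjOn σmap S := by
    intro R₁ hR₁ R₂ hR₂ heq
    have hx₂ : xof R₂ ∈ cell f (xof R₁) := by
      refine Set.mem_iInter.mpr fun p hp => ?_
      have hb : decide (0 < diffs f p (xof R₁)) = decide (0 < diffs f p (xof R₂)) := by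
        have := congrFun heq (e p)
        simpa [hσ, hh, e.symm_apply_apply] using this
      have h1 : diffs f p (xof R₁) ≠ 0 := hgen R₁ hR₁ p hp
      have h2 : diffs f p (xof R₂) ≠ 0 := hgen R₂ hR₂ p hp
      rcases lt_or_gt_of_ne h1 with hc | hc
      · have hneg : diffs f p (xof R₂) < 0 := by
          rcases lt_or_gt_of_ne h2 with hc2 | hc2
          · exact hc2
          · exfalso
            rw [decide_eq_true hc2] at hb
            have := of_decide_eq_true hb
            linarith
        exact mul_pos_of_neg_of_neg hc hneg
      · have hpos : 0 < diffs f p (xof R₂) := by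
          rcases lt_or_gt_of_ne h2 with hc2 | hc2
          · exfalso
            rw [decide_eq_true hc] at hb
            have := of_decide_eq_true hb.symm
            linarith
          · exact hc2
        exact mul_pos hc hpos
    have hmem2 : xof R₂ ∈ R₁ := hsub R₁ hR₁ hx₂
    exact regions_eq_of_inter hR₁ hR₂ ⟨xof R₂, hmem2, hmem R₂ hR₂⟩
  have hmapσ : ∀ R ∈ S, σmap R ∈ Pat h := fun R _ => ⟨xof R, fun l => rfl⟩
  -- injectivity of the argmax map
  have hinji : Set.InjOn iof S := by
    intro R₁ hR₁ R₂ hR₂ heq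
    exact regions_eq_of_argmax hk f hR₁ hR₂ (iof R₁) (hmax R₁ hR₁)
      (by rw [heq]; exact hmax R₂ hR₂)
  -- finiteness
  have hfin : S.Finite := Set.Finite.of_finite_image (Set.toFinite _) hinjσ
  refine ⟨hfin, le_min ?_ ?_⟩
  · calc S.ncard ≤ (Pat h).ncard :=
        Set.ncard_le_ncard_of_injOn σmap hmapσ hinjσ (Set.toFinite _)
      _ ≤ ∑ j ∈ range (n + 1), (k ^ 2 * m).choose j :=
        pat_ncard_le n (Fin n → ℝ) (k ^ 2 * m) h (le_of_eq (Module.finrank_fin_fun ℝ))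
  · calc S.ncard ≤ (Set.univ : Set (Fin m → Fin k)).ncard :=
        Set.ncard_le_ncard_of_injOn iof (fun R _ => Set.mem_univ _) hinji (Set.toFinite _)
      _ = k ^ m := by rw [Set.ncard_univ]; simp
end

section
/- For m ≤ n, there exist parameters for a single maxout layer with n inputs and m rank-k maxout units such that the computed function has exactly k^m linear regions. Specifically, if unit j has pre-activations f_{j,1}(x) = 0, f_{j,i}(x) = (i-1)·x_j - binom-type bias chosen so that the linear-region boundaries of unit j are the parallel hyperplanes {x : x_j = 1}, ..., {x : x_j = k-1}, then the intersections of the units' regions give k^m full-dimensional regions. -/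
namespace MaxoutAux


/-- bias for slope `s` -/
noncomputable def bb (s : ℕ) : ℝ := (s * (s + 1)) / 2

/-- the pre-activation parameters -/
noncomputable def ff {n m k : ℕ} (hmn : m ≤ n) :
    Fin m → Fin k → ((Fin n → ℝ) →ᵃ[ℝ] ℝ) :=
  fun j i => ((i.val : ℝ) • LinearMap.proj (R := ℝ) (φ := fun _ : Fin n => ℝ)
      (Fin.castLE hmn j)).toAffineMap + AffineMap.const ℝ (Fin n → ℝ) (-(bb i.val))

lemma ff_apply {n m k : ℕ} (hmn : m ≤ n) (j : Fin m) (i : Fin k) (x : Fin n → ℝ) :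
    ff hmn j i x = (i.val : ℝ) * x (Fin.castLE hmn j) - bb i.val := by
  simp [ff, sub_eq_add_neg]

/-- the scalar convex piecewise-linear function -/
noncomputable def gg {k : ℕ} (hk : 0 < k) (t : ℝ) : ℝ :=
  Finset.univ.sup' (Finset.univ_nonempty_iff.mpr ⟨⟨0, hk⟩⟩)
    fun i : Fin k => (i.val : ℝ) * t - bb i.val

lemma maxout_eq {n m k : ℕ} (hk : 0 < k) (hmn : m ≤ n) (x : Fin n → ℝ) (j : Fin m) :
    maxoutLayer hk (ff hmn) x j = gg hk (x (Fin.castLE hmn j)) := by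
  unfold maxoutLayer gg
  exact Finset.sup'_congr _ rfl fun i _ => ff_apply hmn j i x


lemma gval {k : ℕ} (hk : 0 < k) (s : Fin k) (t : ℝ)
    (h1 : (s.val : ℝ) ≤ t ∨ s.val = 0) (h2 : t ≤ (s.val : ℝ) + 1 ∨ s.val = k - 1) :
    gg hk t = (s.val : ℝ) * t - bb s.val := by
  unfold gg
  apply le_antisymm
  · apply Finset.sup'_le
    intro i _
    have hik := i.isLt
    have hsk := s.isLt
    rcases lt_trichotomy i.val s.val with hlt | heq | hgt
    · have h1' : (s.val : ℝ) ≤ t := by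
        rcases h1 with h | h
        · exact h
        · exfalso; omega
      have hi : (i.val : ℝ) + 1 ≤ (s.val : ℝ) := by exact_mod_cast hlt
      have hs0 : (0:ℝ) ≤ (i.val : ℝ) := by positivity
      unfold bb
      nlinarith [mul_le_mul_of_nonneg_left h1' (by linarith : (0:ℝ) ≤ (s.val:ℝ) - i.val)]
    · rw [show i = s from Fin.ext heq]
    · have h2' : t ≤ (s.val : ℝ) + 1 := by
        rcases h2 with h | h
        · exact h
        · exfalso; omega
      have hi : (s.val : ℝ) + 1 ≤ (i.val : ℝ) := by exact_mod_cast hgt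
      have hs0 : (0:ℝ) ≤ (s.val : ℝ) := by positivity
      unfold bb
      nlinarith [mul_le_mul_of_nonneg_left h2' (by linarith : (0:ℝ) ≤ (i.val:ℝ) - s.val)]
  · exact Finset.le_sup' (fun i : Fin k => (i.val : ℝ) * t - bb i.val) (Finset.mem_univ s)
/-- the open interval on which slope `s` is active -/
def Iv (k : ℕ) (s : Fin k) : Set ℝ :=
  {t | ((s.val : ℝ) < t ∨ s.val = 0) ∧ (t < (s.val : ℝ) + 1 ∨ s.val = k - 1)}

lemma Iv_eq (k : ℕ) (s : Fin k) :
    Iv k s = (if s.val = 0 then Set.univ else Set.Ioi (s.val : ℝ)) ∩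
      (if s.val = k - 1 then Set.univ else Set.Iio ((s.val : ℝ) + 1)) := by
  ext t
  by_cases h0 : s.val = 0 <;> by_cases h1 : s.val = k - 1 <;>
    simp [Iv, h0, h1, Set.mem_Ioi, Set.mem_Iio] <;> tauto

lemma Iv_open (k : ℕ) (s : Fin k) : IsOpen (Iv k s) := by
  rw [Iv_eq]
  apply IsOpen.inter <;> split <;> simp [isOpen_Ioi, isOpen_Iio]

lemma Iv_convex (k : ℕ) (s : Fin k) : Convex ℝ (Iv k s) := by
  rw [Iv_eq]
  apply Convex.inter <;> split <;>
    simp [convex_univ, convex_Ioi, convex_Iio]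

lemma Iv_mid (k : ℕ) (s : Fin k) : (s.val : ℝ) + 1/2 ∈ Iv k s := by
  constructor
  · left; linarith
  · left; linarith

lemma Iv_disjoint {k : ℕ} {s s' : Fin k} (h : s ≠ s') {t : ℝ}
    (ht : t ∈ Iv k s) (ht' : t ∈ Iv k s') : False := by
  have hne : s.val ≠ s'.val := fun hh => h (Fin.ext hh)
  wlog hlt : s.val < s'.val generalizing s s'
  · exact this h.symm ht' ht (fun hh => h (Fin.ext hh.symm)) (by omega)
  have hsk := s.isLt
  have hs'k := s'.isLt
  have h1 : t < (s.val : ℝ) + 1 := by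
    rcases ht.2 with h' | h'
    · exact h'
    · exfalso; omega
  have h2 : (s'.val : ℝ) < t := by
    rcases ht'.1 with h' | h'
    · exact h'
    · exfalso; omega
  have : (s.val : ℝ) + 1 ≤ (s'.val : ℝ) := by exact_mod_cast hlt
  linarith
lemma gval_Iv {k : ℕ} (hk : 0 < k) {s : Fin k} {t : ℝ} (ht : t ∈ Iv k s) :
    gg hk t = (s.val : ℝ) * t - bb s.val := by
  apply gval
  · rcases ht.1 with h | h
    · exact Or.inl h.le
    · exact Or.inr h
  · rcases ht.2 with h | h
    · exact Or.inl h.le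
    · exact Or.inr h

lemma Iv_cover {k : ℕ} (hk : 0 < k) (t : ℝ) (h : ∀ i : ℕ, 0 < i → i < k → t ≠ i) :
    ∃ s : Fin k, t ∈ Iv k s := by
  by_cases ht1 : t < 1
  · refine ⟨⟨0, hk⟩, Or.inr rfl, ?_⟩
    by_cases hk1 : k = 1
    · exact Or.inr (by simp [hk1])
    · left; push_cast; linarith
  push_neg at ht1
  have ht0 : (0:ℝ) ≤ t := by linarith
  set u : ℕ := min ⌊t⌋₊ (k - 1) with hu
  have huk : u < k := by omega
  refine ⟨⟨u, huk⟩, ?_, ?_⟩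
  · -- lower bound
    have hu1 : 1 ≤ ⌊t⌋₊ := (Nat.one_le_floor_iff t).mpr ht1
    by_cases hu0 : u = 0
    · exact Or.inr hu0
    left
    have hmin : (u : ℝ) ≤ (⌊t⌋₊ : ℝ) := by exact_mod_cast (min_le_left ⌊t⌋₊ (k-1))
    have hle : (u : ℝ) ≤ t := le_trans hmin (Nat.floor_le ht0)
    rcases lt_or_eq_of_le hle with h' | h'
    · exact h'
    · exact absurd h'.symm (h u (by omega) (by omega))
  · -- upper bound
    by_cases huk1 : u = k - 1
    · exact Or.inr huk1
    left
    have hu2 : u = ⌊t⌋₊ := by omega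
    have := Nat.lt_floor_add_one t
    rw [← hu2] at this
    exact_mod_cast this
/-- the open box corresponding to a choice of slope for each unit -/
def Box {n m k : ℕ} (hmn : m ≤ n) (v : Fin m → Fin k) : Set (Fin n → ℝ) :=
  {x | ∀ j : Fin m, x (Fin.castLE hmn j) ∈ Iv k (v j)}

lemma Box_eq {n m k : ℕ} (hmn : m ≤ n) (v : Fin m → Fin k) :
    Box hmn v = ⋂ j : Fin m, (fun x : Fin n → ℝ => x (Fin.castLE hmn j)) ⁻¹' Iv k (v j) := by
  ext x; simp [Box]

lemma Box_open {n m k : ℕ} (hmn : m ≤ n) (v : Fin m → Fin k) : IsOpen (Box hmn v) := by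
  rw [Box_eq]
  apply isOpen_iInter_of_finite
  intro j
  exact (Iv_open k (v j)).preimage (continuous_apply (Fin.castLE hmn j))

lemma Box_convex {n m k : ℕ} (hmn : m ≤ n) (v : Fin m → Fin k) : Convex ℝ (Box hmn v) := by
  rw [Box_eq]
  exact convex_iInter fun j =>
    (Iv_convex k (v j)).linear_preimage (LinearMap.proj (R := ℝ) (φ := fun _ : Fin n => ℝ) (Fin.castLE hmn j))

/-- canonical point of a box -/
noncomputable def pt {n m k : ℕ} (hmn : m ≤ n) (v : Fin m → Fin k) : Fin n → ℝ :=
  fun c => if h : ∃ j : Fin m, Fin.castLE hmn j = c then ((v h.choose).val : ℝ) + 1/2 else 0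

set_option linter.unnecessarySimpa false in
lemma pt_apply {n m k : ℕ} (hmn : m ≤ n) (v : Fin m → Fin k) (j : Fin m) :
    pt hmn v (Fin.castLE hmn j) = ((v j).val : ℝ) + 1/2 := by
  have h : ∃ j' : Fin m, Fin.castLE hmn j' = Fin.castLE hmn j := ⟨j, rfl⟩
  have hch : h.choose = j := by
    have := h.choose_spec
    have hval : (h.choose : ℕ) = (j : ℕ) := by
      simpa using congrArg Fin.val this
    
    exact Fin.ext hval
  simp only [pt, dif_pos h, hch]

lemma pt_mem {n m k : ℕ} (hmn : m ≤ n) (v : Fin m → Fin k) : pt hmn v ∈ Box hmn v := by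
  intro j
  rw [pt_apply]
  exact Iv_mid k (v j)

lemma Box_nonempty {n m k : ℕ} (hmn : m ≤ n) (v : Fin m → Fin k) :
    (Box hmn v).Nonempty := ⟨pt hmn v, pt_mem hmn v⟩

lemma Box_connected {n m k : ℕ} (hmn : m ≤ n) (v : Fin m → Fin k) :
    IsConnected (Box hmn v) :=
  ⟨Box_nonempty hmn v, (Box_convex hmn v).isPreconnected⟩

lemma Box_affine {n m k : ℕ} (hk : 0 < k) (hmn : m ≤ n) (v : Fin m → Fin k) :
    AffineOn (maxoutLayer hk (ff hmn)) (Box hmn v) := by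
  refine ⟨LinearMap.pi fun j => ((v j).val : ℝ) • LinearMap.proj (R := ℝ) (Fin.castLE hmn j),
    fun j => -(bb (v j).val), fun x hx => ?_⟩
  funext j
  rw [maxout_eq hk hmn x j, gval_Iv hk (hx j)]
  simp [sub_eq_add_neg]

lemma Box_inj {n m k : ℕ} (hmn : m ≤ n) : Function.Injective (Box (k := k) hmn) := by
  intro v v' h
  funext j
  by_contra hne
  have h1 := pt_mem hmn v j
  have h2 : pt hmn v ∈ Box hmn v' := h ▸ pt_mem hmn v
  exact Iv_disjoint hne h1 (h2 j)
lemma no_kink {n m k : ℕ} (hk : 0 < k) (hmn : m ≤ n) {R : Set (Fin n → ℝ)}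
    (hRo : IsOpen R) (hRa : AffineOn (maxoutLayer hk (ff hmn)) R)
    {z : Fin n → ℝ} (hz : z ∈ R) (j : Fin m) (i : ℕ) (hi0 : 0 < i) (hik : i < k) :
    z (Fin.castLE hmn j) ≠ (i : ℝ) := by
  intro heq
  obtain ⟨A, c0, hA⟩ := hRa
  obtain ⟨ε, hε, hball⟩ := Metric.isOpen_iff.mp hRo z hz
  set c : Fin n := Fin.castLE hmn j
  set δ : ℝ := min (ε / 2) 1 with hδ
  have hδ0 : 0 < δ := lt_min (by linarith) one_pos
  have hδ1 : δ ≤ 1 := min_le_right _ _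
  have hδε : δ < ε := lt_of_le_of_lt (min_le_left _ _) (by linarith)
  set e : Fin n → ℝ := Pi.single c 1 with he
  have hmem : ∀ σ : ℝ, |σ| ≤ δ → z + σ • e ∈ R := by
    intro σ hσ
    apply hball
    rw [Metric.mem_ball, dist_pi_lt_iff hε]
    intro c'
    have : (z + σ • e) c' - z c' = σ * e c' := by simp [he]
    rw [Real.dist_eq, this]
    have : |e c'| ≤ 1 := by
      by_cases hc : c' = c <;> simp [he, hc, Pi.single_apply]
    calc |σ * e c'| = |σ| * |e c'| := abs_mul _ _
      _ ≤ δ * 1 := mul_le_mul hσ this (abs_nonneg _) hδ0.le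
      _ < ε := by linarith
  have hp : z + δ • e ∈ R := hmem δ (by rw [abs_of_pos hδ0])
  have hm : z + (-δ) • e ∈ R := hmem (-δ) (by rw [abs_neg, abs_of_pos hδ0])
  -- affine midpoint identity at coordinate j
  have key : maxoutLayer hk (ff hmn) (z + δ • e) j + maxoutLayer hk (ff hmn) (z + (-δ) • e) j
      = 2 * maxoutLayer hk (ff hmn) z j := by
    rw [hA _ hp, hA _ hm, hA _ hz]
    have : (z + δ • e) + (z + (-δ) • e) = z + z := by
      funext c'; simp; ring
    have hsum : A (z + δ • e) + A (z + (-δ) • e) = A z + A z := by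
      rw [← map_add, this, map_add]
    have := congrFun hsum j
    simp only [Pi.add_apply] at this ⊢
    linarith
  -- compute the three values via gval
  have hec : e c = 1 := by simp [he]
  have hvp : (z + δ • e) c = (i : ℝ) + δ := by simp [he, heq]
  have hvm : (z + (-δ) • e) c = (i : ℝ) - δ := by simp [he, heq]; ring_nf
  rw [maxout_eq hk hmn, maxout_eq hk hmn, maxout_eq hk hmn] at key
  show False
  have hi1 : (1:ℝ) ≤ (i:ℝ) := by exact_mod_cast hi0
  have g1 : gg hk ((z + δ • e) c) = (i:ℝ) * ((i:ℝ) + δ) - bb i := by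
    rw [hvp, gval hk ⟨i, hik⟩ _ (Or.inl (by linarith)) (Or.inl (by norm_num; linarith))]
  have g2 : gg hk ((z + (-δ) • e) c) = ((i:ℝ) - 1) * ((i:ℝ) - δ) - bb (i - 1) := by
    have hcast : ((i - 1 : ℕ) : ℝ) = (i:ℝ) - 1 := by
      push_cast [Nat.cast_sub hi0]; ring
    rw [hvm, gval hk ⟨i - 1, by omega⟩ _ (Or.inl (by rw [hcast]; linarith))
      (Or.inl (by rw [hcast]; linarith))]
    rw [hcast]
  have g3 : gg hk (z c) = (i:ℝ) * (i:ℝ) - bb i := by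
    rw [heq, gval hk ⟨i, hik⟩ _ (Or.inl le_rfl) (Or.inl (by linarith))]
  rw [g1, g2, g3] at key
  have hbb : bb i = bb (i - 1) + (i : ℝ) := by
    unfold bb
    have hcast : ((i - 1 : ℕ) : ℝ) = (i:ℝ) - 1 := by
      push_cast [Nat.cast_sub hi0]; ring
    rw [hcast]; ring
  rw [hbb] at key
  nlinarith [key]
lemma sub_box {n m k : ℕ} (hk : 0 < k) (hmn : m ≤ n) {R : Set (Fin n → ℝ)}
    (hRo : IsOpen R) (hRc : IsConnected R) (hRa : AffineOn (maxoutLayer hk (ff hmn)) R)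
    (v : Fin m → Fin k) (hne : (R ∩ Box hmn v).Nonempty) : R ⊆ Box hmn v := by
  intro y hy j
  by_contra hyj
  set c : Fin n := Fin.castLE hmn j
  set S : Set ℝ := (fun x : Fin n → ℝ => x c) '' R with hS
  have hScon : IsPreconnected S :=
    (hRc.image _ (continuous_apply c).continuousOn).isPreconnected
  have hcov : ∀ t ∈ S, ∃ s : Fin k, t ∈ Iv k s := by
    rintro t ⟨x, hx, rfl⟩
    exact Iv_cover hk _ (fun i hi0 hik => no_kink hk hmn hRo hRa hx j i hi0 hik)
  set u : Set ℝ := Iv k (v j)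
  set w : Set ℝ := ⋃ s : Fin k, ⋃ _ : s ≠ v j, Iv k s with hw
  have hwo : IsOpen w := isOpen_iUnion fun s => isOpen_iUnion fun _ => Iv_open k s
  have hcover : S ⊆ u ∪ w := by
    intro t ht
    obtain ⟨s, hs⟩ := hcov t ht
    by_cases hsv : s = v j
    · subst hsv; exact Or.inl hs
    · exact Or.inr (Set.mem_iUnion.mpr ⟨s, Set.mem_iUnion.mpr ⟨hsv, hs⟩⟩)
  obtain ⟨x0, hx0R, hx0B⟩ := hne
  have hSu : (S ∩ u).Nonempty := ⟨x0 c, ⟨x0, hx0R, rfl⟩, hx0B j⟩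
  have hSw : (S ∩ w).Nonempty := by
    refine ⟨y c, ⟨y, hy, rfl⟩, ?_⟩
    obtain ⟨s, hs⟩ := hcov (y c) ⟨y, hy, rfl⟩
    have hsv : s ≠ v j := by rintro rfl; exact hyj hs
    exact Set.mem_iUnion.mpr ⟨s, Set.mem_iUnion.mpr ⟨hsv, hs⟩⟩
  obtain ⟨t, _, htu, htw⟩ := hScon u w (Iv_open k (v j)) hwo hcover hSu hSw
  obtain ⟨s, hsw⟩ := Set.mem_iUnion.mp htw
  obtain ⟨hsv, hts⟩ := Set.mem_iUnion.mp hsw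
  exact Iv_disjoint hsv hts htu

lemma box_region {n m k : ℕ} (hk : 0 < k) (hmn : m ≤ n) (v : Fin m → Fin k) :
    IsLinearRegion (maxoutLayer hk (ff hmn)) (Box hmn v) := by
  refine ⟨Box_open hmn v, Box_connected hmn v, Box_affine hk hmn v, ?_⟩
  intro R' hsub hR'o hR'c hR'a
  have h1 : R' ⊆ Box hmn v := by
    apply sub_box hk hmn hR'o hR'c hR'a
    obtain ⟨x, hx⟩ := Box_nonempty hmn v
    exact ⟨x, hsub hx, hx⟩
  exact Set.Subset.antisymm h1 hsub

lemma region_eq_box {n m k : ℕ} (hk : 0 < k) (hmn : m ≤ n) {R : Set (Fin n → ℝ)}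
    (hR : IsLinearRegion (maxoutLayer hk (ff hmn)) R) : ∃ v : Fin m → Fin k, R = Box hmn v := by
  obtain ⟨hRo, hRc, hRa, hmax⟩ := hR
  obtain ⟨x, hx⟩ := hRc.nonempty
  have hcov : ∀ j : Fin m, ∃ s : Fin k, x (Fin.castLE hmn j) ∈ Iv k s := fun j =>
    Iv_cover hk _ (fun i hi0 hik => no_kink hk hmn hRo hRa hx j i hi0 hik)
  choose v hv using hcov
  refine ⟨v, ?_⟩
  have hsub : R ⊆ Box hmn v := sub_box hk hmn hRo hRc hRa v ⟨x, hx, hv⟩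
  exact (hmax (Box hmn v) hsub (Box_open hmn v) (Box_connected hmn v)
    (Box_affine hk hmn v)).symm

lemma regions_eq {n m k : ℕ} (hk : 0 < k) (hmn : m ≤ n) :
    {R | IsLinearRegion (maxoutLayer hk (ff hmn)) R} = Set.range (Box (k := k) hmn) := by
  ext R
  constructor
  · intro hR
    obtain ⟨v, hv⟩ := region_eq_box hk hmn hR
    exact ⟨v, hv.symm⟩
  · rintro ⟨v, rfl⟩
    exact box_region hk hmn v

end MaxoutAux

/-- For `m ≤ n` there are parameters for a single maxout layer with `n` inputs and `m`
rank-`k` maxout units such that the computed function has exactly `k^m` linear regions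
(chosen so that the linear-region boundaries of unit `j` are the parallel hyperplanes
`{x : x_j = 1}, …, {x : x_j = k-1}`). -/
theorem maxout_layer_km_regions (n m k : ℕ) (hk : 0 < k) (hmn : m ≤ n) :
    ∃ f : Fin m → Fin k → ((Fin n → ℝ) →ᵃ[ℝ] ℝ),
      {R | IsLinearRegion (maxoutLayer hk f) R}.Finite ∧
      {R | IsLinearRegion (maxoutLayer hk f) R}.ncard = k ^ m := by
  refine ⟨MaxoutAux.ff hmn, ?_, ?_⟩
  · rw [MaxoutAux.regions_eq hk hmn]
    exact Set.finite_range _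
  · rw [MaxoutAux.regions_eq hk hmn, ← Set.image_univ,
      Set.ncard_image_of_injective _ (MaxoutAux.Box_inj hmn), Set.ncard_univ,
      Nat.card_eq_fintype_card]
    simp
end

section
/- The Catalan arrangement in ℝⁿ, consisting of the hyperplanes {x : x_i - x_j = s} for all 1 ≤ i < j ≤ n and s ∈ {-1, 0, 1}, has exactly n! · C_n regions, where C_n = (1/(n+1))·C(2n, n) is the n-th Catalan number. -/
open Finset

/-- The Finset of monotone functions `f : Fin n → Fin n` with `i ≤ f i`. -/
def AF (n : ℕ) : Finset (Fin n → Fin n) :=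
  univ.filter (fun f => (∀ i j : Fin n, (i : ℕ) ≤ j → (f i : ℕ) ≤ f j) ∧ ∀ i : Fin n, (i : ℕ) ≤ f i)

lemma mem_AF {n : ℕ} {f : Fin n → Fin n} :
    f ∈ AF n ↔ (∀ i j : Fin n, (i : ℕ) ≤ j → (f i : ℕ) ≤ f j) ∧ ∀ i : Fin n, (i : ℕ) ≤ f i := by
  simp [AF]

/-- extension of `f` to ℕ by the identity -/
def fh {n : ℕ} (f : Fin n → Fin n) : ℕ → ℕ := fun m => if h : m < n then (f ⟨m, h⟩ : ℕ) else m

lemma fh_lt {n : ℕ} (f : Fin n → Fin n) {m : ℕ} (h : m < n) : fh f m < n := by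
  simp only [fh, dif_pos h]; exact (f ⟨m, h⟩).isLt

lemma fh_eq {n : ℕ} (f : Fin n → Fin n) {m : ℕ} (h : m < n) : fh f m = (f ⟨m, h⟩ : ℕ) := by
  simp only [fh, dif_pos h]

lemma fh_ge {n : ℕ} {f : Fin n → Fin n} (hf : f ∈ AF n) (m : ℕ) : m ≤ fh f m := by
  unfold fh; split
  · next h => exact (mem_AF.1 hf).2 ⟨m, h⟩
  · exact le_refl _

lemma fh_mono {n : ℕ} {f : Fin n → Fin n} (hf : f ∈ AF n) : Monotone (fh f) := by
  intro a b hab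
  unfold fh
  split <;> split
  · exact (mem_AF.1 hf).1 _ _ hab
  · next h1 h2 => exact le_trans (Nat.le_of_lt (Fin.isLt _)) (by omega)
  · omega
  · exact hab

lemma AF_exists_fix {n : ℕ} (f : Fin n → Fin n) : ∃ m, fh f m = m :=
  ⟨n, by simp [fh]⟩

/-- least fixed point of `fh f`, as ℕ -/
def NfP {n : ℕ} (f : Fin n → Fin n) : ℕ := Nat.find (AF_exists_fix f)

lemma NfP_spec {n : ℕ} (f : Fin n → Fin n) : fh f (NfP f) = NfP f := Nat.find_spec (AF_exists_fix f)

lemma NfP_min {n : ℕ} (f : Fin n → Fin n) {m : ℕ} (h : m < NfP f) : fh f m ≠ m :=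
  Nat.find_min (AF_exists_fix f) h

lemma NfP_le {n : ℕ} (f : Fin n → Fin n) {m : ℕ} (h : fh f m = m) : NfP f ≤ m :=
  Nat.find_le h

lemma NfP_le_of_mem {n : ℕ} {f : Fin (n + 1) → Fin (n + 1)} (hf : f ∈ AF (n + 1)) :
    NfP f ≤ n := by
  apply NfP_le
  have h1 : (n : ℕ) < n + 1 := Nat.lt_succ_self n
  have h2 := (mem_AF.1 hf).2 ⟨n, h1⟩
  have h3 := (f ⟨n, h1⟩).isLt
  rw [fh_eq f h1]; simp only [Fin.val_mk] at h2; omega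

/-- least fixed point of `f`, as an element of `Fin (n+1)` -/
def lfp {n : ℕ} (f : Fin (n + 1) → Fin (n + 1)) : Fin (n + 1) :=
  ⟨min (NfP f) n, Nat.lt_succ_of_le (min_le_right _ _)⟩

lemma lfp_eq_of_mem {n : ℕ} {f : Fin (n + 1) → Fin (n + 1)} (hf : f ∈ AF (n + 1)) :
    (lfp f : ℕ) = NfP f := by
  simp [lfp, Nat.min_eq_left (NfP_le_of_mem hf)]

/-- the fiber of functions with least fixed point `k` -/
def fiber {n : ℕ} (k : Fin (n + 1)) : Finset (Fin (n + 1) → Fin (n + 1)) :=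
  (AF (n + 1)).filter (fun f => lfp f = k)

/-- restriction below the least fixed point -/
def cutL {n : ℕ} (k : Fin (n + 1)) (f : Fin (n + 1) → Fin (n + 1)) : Fin k → Fin k :=
  fun a => ⟨min ((f ⟨a, by have := a.isLt; have := k.isLt; omega⟩ : ℕ) - 1) ((k : ℕ) - 1),
    by have := a.isLt; omega⟩

/-- restriction above the least fixed point -/
def cutR {n : ℕ} (k : Fin (n + 1)) (f : Fin (n + 1) → Fin (n + 1)) : Fin (n - k) → Fin (n - k) :=
  fun a => ⟨min ((f ⟨(k : ℕ) + 1 + a, by have := a.isLt; omega⟩ : ℕ) - ((k : ℕ) + 1))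
      (n - (k : ℕ) - 1), by have := a.isLt; omega⟩

/-- glueing two functions into one with least fixed point `k` -/
def glue {n : ℕ} (k : Fin (n + 1)) (p : (Fin k → Fin k) × (Fin (n - k) → Fin (n - k))) :
    Fin (n + 1) → Fin (n + 1) := fun i =>
  if hi : (i : ℕ) < k then ⟨min ((p.1 ⟨i, hi⟩ : ℕ) + 1) n, Nat.lt_succ_of_le (min_le_right _ _)⟩
  else if hi2 : (i : ℕ) = k then ⟨k, k.isLt⟩
  else ⟨min ((p.2 ⟨(i : ℕ) - ((k : ℕ) + 1), by have := i.isLt; have := k.isLt; omega⟩ : ℕ)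
      + (k : ℕ) + 1) n, Nat.lt_succ_of_le (min_le_right _ _)⟩

lemma glue_val_lt {n : ℕ} (k : Fin (n + 1)) (p) (i : Fin (n + 1)) (hi : (i : ℕ) < k) :
    (glue k p i : ℕ) = (p.1 ⟨i, hi⟩ : ℕ) + 1 := by
  have h1 := (p.1 ⟨i, hi⟩).isLt
  have h2 := k.isLt
  simp only [glue, dif_pos hi]
  omega

lemma glue_val_eq {n : ℕ} (k : Fin (n + 1)) (p) (i : Fin (n + 1)) (hi : (i : ℕ) = k) :
    (glue k p i : ℕ) = k := by
  simp only [glue, dif_neg (by omega : ¬ (i : ℕ) < k), dif_pos hi]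

lemma glue_val_gt {n : ℕ} (k : Fin (n + 1)) (p) (i : Fin (n + 1)) (hi : (k : ℕ) < i) :
    (glue k p i : ℕ) =
      (p.2 ⟨(i : ℕ) - ((k : ℕ) + 1), by have := i.isLt; have := k.isLt; omega⟩ : ℕ)
        + (k : ℕ) + 1 := by
  have h1 := (p.2 ⟨(i : ℕ) - ((k : ℕ) + 1), by have := i.isLt; have := k.isLt; omega⟩).isLt
  have h2 := i.isLt
  simp only [glue, dif_neg (by omega : ¬ (i : ℕ) < k), dif_neg (by omega : ¬ (i : ℕ) = k)]
  omega

section fiberfacts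

variable {n : ℕ} {k : Fin (n + 1)} {f : Fin (n + 1) → Fin (n + 1)}

lemma fiber_mono (hf : f ∈ fiber k) : ∀ i j : Fin (n+1), (i : ℕ) ≤ j → (f i : ℕ) ≤ f j :=
  (mem_AF.1 (Finset.mem_filter.1 hf).1).1

lemma fiber_ge (hf : f ∈ fiber k) : ∀ i : Fin (n+1), (i : ℕ) ≤ f i :=
  (mem_AF.1 (Finset.mem_filter.1 hf).1).2

lemma fiber_NfP (hf : f ∈ fiber k) : NfP f = (k : ℕ) := by
  rw [← lfp_eq_of_mem (Finset.mem_filter.1 hf).1, (Finset.mem_filter.1 hf).2]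

lemma fiber_fix (hf : f ∈ fiber k) : (f ⟨k, k.isLt⟩ : ℕ) = k := by
  have h := NfP_spec f
  rw [fiber_NfP hf] at h
  rwa [fh_eq f k.isLt] at h

lemma fiber_val_lt (hf : f ∈ fiber k) {a : ℕ} (ha : a < n + 1) (hak : a < (k : ℕ)) :
    a + 1 ≤ (f ⟨a, ha⟩ : ℕ) ∧ (f ⟨a, ha⟩ : ℕ) ≤ k := by
  have h1 := fiber_ge hf ⟨a, ha⟩
  have h2 : fh f a ≠ a := by
    rw [← fiber_NfP hf] at hak; exact NfP_min f hak
  rw [fh_eq f ha] at h2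
  have h3 := fiber_mono hf ⟨a, ha⟩ ⟨k, k.isLt⟩ (by simpa using le_of_lt hak)
  rw [fiber_fix hf] at h3
  simp only [Fin.val_mk] at h1 h2
  exact ⟨by omega, h3⟩

lemma cutL_val (hf : f ∈ fiber k) (a : Fin k) :
    (cutL k f a : ℕ) = (f ⟨a, by have := a.isLt; have := k.isLt; omega⟩ : ℕ) - 1 := by
  have h := fiber_val_lt hf (a := (a : ℕ)) (by have := a.isLt; have := k.isLt; omega) a.isLt
  have := a.isLt
  simp only [cutL]
  omega

lemma cutR_val (hf : f ∈ fiber k) (a : Fin (n - k)) :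
    (cutR k f a : ℕ) = (f ⟨(k : ℕ) + 1 + a, by have := a.isLt; omega⟩ : ℕ) - ((k : ℕ) + 1) := by
  have h1 := fiber_ge hf ⟨(k : ℕ) + 1 + a, by have := a.isLt; omega⟩
  have h2 := (f ⟨(k : ℕ) + 1 + a, by have := a.isLt; omega⟩).isLt
  have := a.isLt
  simp only [Fin.val_mk] at h1
  simp only [cutR]
  omega

lemma cut_mem (hf : f ∈ fiber k) : (cutL k f, cutR k f) ∈ AF k ×ˢ AF (n - k) := by
  rw [Finset.mem_product, mem_AF, mem_AF]
  refine ⟨⟨?_, ?_⟩, ?_, ?_⟩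
  · intro a b hab
    rw [cutL_val hf, cutL_val hf]
    have h1 := fiber_val_lt hf (a := (a : ℕ)) (by have := a.isLt; have := k.isLt; omega) a.isLt
    have h2 := fiber_mono hf ⟨a, by have := a.isLt; have := k.isLt; omega⟩
      ⟨b, by have := b.isLt; have := k.isLt; omega⟩ hab
    omega
  · intro a
    rw [cutL_val hf]
    have h1 := fiber_val_lt hf (a := (a : ℕ)) (by have := a.isLt; have := k.isLt; omega) a.isLt
    omega
  · intro a b hab
    rw [cutR_val hf, cutR_val hf]
    have h2 := fiber_mono hf ⟨(k : ℕ) + 1 + a, by have := a.isLt; omega⟩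
      ⟨(k : ℕ) + 1 + b, by have := b.isLt; omega⟩ (by simp; omega)
    omega
  · intro a
    rw [cutR_val hf]
    have h1 := fiber_ge hf ⟨(k : ℕ) + 1 + a, by have := a.isLt; omega⟩
    simp only [Fin.val_mk] at h1
    omega

variable {p : (Fin k → Fin k) × (Fin (n - k) → Fin (n - k))}

lemma glue_mem (hp : p ∈ AF k ×ˢ AF (n - k)) : glue k p ∈ fiber k := by
  rw [Finset.mem_product, mem_AF, mem_AF] at hp
  obtain ⟨⟨h1mono, h1ge⟩, h2mono, h2ge⟩ := hp
  have hAF : glue k p ∈ AF (n + 1) := by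
    rw [mem_AF]
    constructor
    · intro a b hab
      rcases lt_trichotomy (a : ℕ) (k : ℕ) with ha | ha | ha
      · rw [glue_val_lt k p a ha]
        rcases lt_trichotomy (b : ℕ) (k : ℕ) with hb | hb | hb
        · rw [glue_val_lt k p b hb]
          have := h1mono ⟨a, ha⟩ ⟨b, hb⟩ hab
          omega
        · rw [glue_val_eq k p b hb]
          have := (p.1 ⟨a, ha⟩).isLt
          omega
        · rw [glue_val_gt k p b hb]
          have := (p.1 ⟨a, ha⟩).isLt
          omega
      · have hb : (k : ℕ) ≤ b := by omega
        rw [glue_val_eq k p a ha]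
        rcases eq_or_lt_of_le hb with hb | hb
        · rw [glue_val_eq k p b hb.symm]
        · rw [glue_val_gt k p b hb]; omega
      · have hb : (k : ℕ) < b := by omega
        rw [glue_val_gt k p a ha, glue_val_gt k p b hb]
        have := h2mono ⟨(a : ℕ) - ((k : ℕ) + 1), by have := a.isLt; have := k.isLt; omega⟩
          ⟨(b : ℕ) - ((k : ℕ) + 1), by have := b.isLt; have := k.isLt; omega⟩ (by simp; omega)
        omega
    · intro a
      rcases lt_trichotomy (a : ℕ) (k : ℕ) with ha | ha | ha
      · rw [glue_val_lt k p a ha]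
        have := h1ge ⟨a, ha⟩
        simp only [Fin.val_mk] at this
        omega
      · rw [glue_val_eq k p a ha]; omega
      · rw [glue_val_gt k p a ha]
        have := h2ge ⟨(a : ℕ) - ((k : ℕ) + 1), by have := a.isLt; have := k.isLt; omega⟩
        simp only [Fin.val_mk] at this
        omega
  rw [fiber, Finset.mem_filter]
  refine ⟨hAF, ?_⟩
  have hNf : NfP (glue k p) = (k : ℕ) := by
    apply le_antisymm
    · apply NfP_le
      rw [fh_eq _ k.isLt]
      exact glue_val_eq k p ⟨k, k.isLt⟩ rfl
    · by_contra hlt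
      push_neg at hlt
      have hspec := NfP_spec (glue k p)
      set m := NfP (glue k p) with hm
      have hmlt : m < n + 1 := by have := k.isLt; omega
      rw [fh_eq _ hmlt] at hspec
      rw [glue_val_lt k p ⟨m, hmlt⟩ hlt] at hspec
      have := h1ge ⟨m, hlt⟩
      simp only [Fin.val_mk] at this hspec
      omega
  rw [Fin.ext_iff, lfp_eq_of_mem hAF, hNf]

lemma glue_cut (hf : f ∈ fiber k) : glue k (cutL k f, cutR k f) = f := by
  funext x
  apply Fin.ext
  rcases lt_trichotomy (x : ℕ) (k : ℕ) with hx | hx | hx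
  · rw [glue_val_lt k _ x hx]
    rw [cutL_val hf]
    have h := fiber_val_lt hf (a := (x : ℕ)) (by have := x.isLt; omega) hx
    have harg : (⟨(x : ℕ), by have := x.isLt; omega⟩ : Fin (n + 1)) = x := Fin.ext rfl
    rw [harg] at h ⊢
    omega
  · rw [glue_val_eq k _ x hx]
    have := fiber_fix hf
    have harg : (⟨(k : ℕ), k.isLt⟩ : Fin (n + 1)) = x := Fin.ext hx.symm
    rw [harg] at this
    omega
  · rw [glue_val_gt k _ x hx]
    rw [cutR_val hf]
    have harg : (⟨(k : ℕ) + 1 + ((x : ℕ) - ((k : ℕ) + 1)), by have := x.isLt; omega⟩ : Fin (n + 1))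
        = x := Fin.ext (by simp; omega)
    rw [harg]
    have := fiber_ge hf x
    omega

lemma cut_glue (hp : p ∈ AF k ×ˢ AF (n - k)) :
    (cutL k (glue k p), cutR k (glue k p)) = p := by
  have hf := glue_mem hp
  ext
  · next a =>
    rw [cutL_val hf]
    rw [glue_val_lt k p ⟨(a : ℕ), by have := a.isLt; have := k.isLt; omega⟩ a.isLt]
    have harg : (⟨(a : ℕ), a.isLt⟩ : Fin k) = a := Fin.ext rfl
    rw [harg]
    omega
  · next a =>
    rw [cutR_val hf]
    rw [glue_val_gt k p ⟨(k : ℕ) + 1 + (a : ℕ), by have := a.isLt; omega⟩ (by simp; omega)]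
    have harg : (⟨(k : ℕ) + 1 + (a : ℕ) - ((k : ℕ) + 1), by have := a.isLt; omega⟩ : Fin (n - k))
        = a := Fin.ext (by simp)
    rw [harg]
    omega

end fiberfacts

lemma card_AF : ∀ n, (AF n).card = catalan n := by
  intro n
  induction n using Nat.strong_induction_on with
  | _ n ih =>
    match n with
    | 0 =>
      rw [catalan_zero]
      have h : AF 0 = univ := Finset.eq_univ_iff_forall.2 fun f =>
        mem_AF.2 ⟨fun i => i.elim0, fun i => i.elim0⟩
      rw [h, card_univ]
      simp
    | n + 1 =>
      rw [catalan_succ]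
      rw [Finset.card_eq_sum_card_fiberwise (f := lfp) (t := univ) (fun f _ => mem_univ _)]
      apply Finset.sum_congr rfl
      intro k _
      have hkn : (k : ℕ) ≤ n := Nat.lt_succ_iff.1 k.isLt
      rw [← ih k (by omega), ← ih (n - k) (by omega), ← Finset.card_product]
      exact Finset.card_bij' (fun f _ => (cutL k f, cutR k f)) (fun p _ => glue k p)
        (fun f hf => cut_mem hf) (fun p hp => glue_mem hp)
        (fun f hf => glue_cut hf) (fun p hp => cut_glue hp)

/-! ### Construction of a point realizing a given pattern -/

/-- recursive construction of an increasing sequence with `Y j < Y i + 1 ↔ j ≤ fh f i` -/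
noncomputable def Y {n : ℕ} (f : Fin n → Fin n) : ℕ → ℝ
  | 0 => 0
  | (j + 1) =>
    if H : ∃ k, k ≤ j ∧ j + 1 ≤ fh f k then
      let m := Nat.find H
      (max (Y f j) (if m = 0 then Y f j else Y f (m - 1) + 1) + (Y f m + 1)) / 2
    else Y f j + 2
  termination_by j => j
  decreasing_by
  · omega
  · have := (Nat.find_spec H).1; omega
  · have := (Nat.find_spec H).1; omega
  · omega

lemma Y_spec {n : ℕ} {f : Fin n → Fin n} (hf : f ∈ AF n) :
    ∀ j i : ℕ, i < j → Y f i < Y f j ∧ (j ≤ fh f i → Y f j < Y f i + 1) ∧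
      (fh f i < j → Y f i + 1 < Y f j) := by
  intro j
  induction j using Nat.strong_induction_on with
  | _ j ihj =>
    match j with
    | 0 => omega
    | j + 1 =>
      intro i hij
      have hmoneY : ∀ a b : ℕ, a ≤ b → b ≤ j → Y f a ≤ Y f b := by
        intro a b hab hbj
        rcases eq_or_lt_of_le hab with h | h
        · rw [h]
        · exact le_of_lt (ihj b (by omega) a h).1
      by_cases H : ∃ k, k ≤ j ∧ j + 1 ≤ fh f k
      · set m := Nat.find H with hm
        have hspec := Nat.find_spec H
        rw [← hm] at hspec
        have hmin : ∀ l, l < m → ¬ (l ≤ j ∧ j + 1 ≤ fh f l) := fun l hl => Nat.find_min H hl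
        have hmj : m ≤ j := hspec.1
        have hYj1 : Y f (j + 1) =
            (max (Y f j) (if m = 0 then Y f j else Y f (m - 1) + 1) + (Y f m + 1)) / 2 := by
          rw [Y.eq_2, dif_pos H]
        -- lower bound < upper bound
        have hlow : max (Y f j) (if m = 0 then Y f j else Y f (m - 1) + 1) < Y f m + 1 := by
          apply max_lt
          · rcases eq_or_lt_of_le hmj with h | h
            · rw [h]; linarith
            · exact (ihj j (by omega) m h).2.1 (le_of_lt hspec.2)
          · split
            · rcases eq_or_lt_of_le hmj with h | h
              · rw [h]; linarith
              · linarith [((ihj j (by omega) m h).2.1 (le_of_lt hspec.2))]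
            · next hm0 =>
              have := (ihj m (by omega) (m - 1) (by omega)).1
              linarith
        have hup : Y f (j + 1) < Y f m + 1 := by rw [hYj1]; linarith [hlow]
        have hdown : max (Y f j) (if m = 0 then Y f j else Y f (m - 1) + 1) < Y f (j + 1) := by
          rw [hYj1]; linarith [hlow]
        have hYjlt : Y f j < Y f (j + 1) := lt_of_le_of_lt (le_max_left _ _) hdown
        refine ⟨lt_of_le_of_lt (hmoneY i j (by omega) le_rfl) hYjlt, ?_, ?_⟩
        · intro hfi
          have hmi : m ≤ i := by
            by_contra hc
            push_neg at hc
            exact hmin i hc ⟨by omega, hfi⟩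
          calc Y f (j + 1) < Y f m + 1 := hup
            _ ≤ Y f i + 1 := by linarith [hmoneY m i hmi (by omega)]
        · intro hfi2
          have him : i < m := by
            by_contra hc
            push_neg at hc
            have := fh_mono hf hc
            omega
          have hm0 : m ≠ 0 := by omega
          have h1 : Y f i ≤ Y f (m - 1) := hmoneY i (m - 1) (by omega) (by omega)
          have h2 : Y f (m - 1) + 1 ≤ max (Y f j) (if m = 0 then Y f j else Y f (m - 1) + 1) := by
            rw [if_neg hm0]; exact le_max_right _ _
          linarith [hdown]
      · have hYj1 : Y f (j + 1) = Y f j + 2 := by rw [Y.eq_2, dif_neg H]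
        have h1 : Y f i ≤ Y f j := hmoneY i j (by omega) le_rfl
        refine ⟨by linarith, ?_, ?_⟩
        · intro hfi
          push_neg at H
          have := H i (by omega)
          omega
        · intro _
          linarith

/-! ### The Catalan arrangement -/

/-- complement of the Catalan arrangement -/
def UU (n : ℕ) : Set (Fin n → ℝ) :=
  {x : Fin n → ℝ | ∀ i j : Fin n, i < j → ∀ s ∈ ({-1, 0, 1} : Set ℝ), x i - x j ≠ s}

lemma U_ne {n : ℕ} {x : Fin n → ℝ} (hx : x ∈ UU n) {i j : Fin n} (hij : i ≠ j) :
    x i ≠ x j ∧ x i + 1 ≠ x j := by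
  rcases lt_or_gt_of_ne hij with h | h
  · have h0 := hx i j h 0 (by simp)
    have h1 := hx i j h (-1) (by simp)
    constructor <;> intro hc <;> [exact h0 (by linarith); exact h1 (by linarith)]
  · have h0 := hx j i h 0 (by simp)
    have h1 := hx j i h 1 (by simp)
    constructor <;> intro hc <;> [exact h0 (by linarith); exact h1 (by linarith)]

/-- two points are in the same region -/
def SameRg {n : ℕ} (x y : Fin n → ℝ) : Prop :=
  ∀ i j : Fin n, (x i < x j ↔ y i < y j) ∧ (x i + 1 < x j ↔ y i + 1 < y j) ∧
    (x i < x j + 1 ↔ y i < y j + 1)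

lemma rel_refl {n : ℕ} (x : Fin n → ℝ) : SameRg x x := fun i j => ⟨Iff.rfl, Iff.rfl, Iff.rfl⟩

lemma rel_symm {n : ℕ} {x y : Fin n → ℝ} (h : SameRg x y) : SameRg y x :=
  fun i j => ⟨(h i j).1.symm, (h i j).2.1.symm, (h i j).2.2.symm⟩

lemma rel_trans {n : ℕ} {x y z : Fin n → ℝ} (h : SameRg x y) (h' : SameRg y z) : SameRg x z :=
  fun i j => ⟨(h i j).1.trans (h' i j).1, (h i j).2.1.trans (h' i j).2.1,
    (h i j).2.2.trans (h' i j).2.2⟩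

lemma rel_of_imp {n : ℕ} {x y : Fin n → ℝ} (hx : x ∈ UU n)
    (h : ∀ i j : Fin n, (x i < x j → y i < y j) ∧ (x i + 1 < x j → y i + 1 < y j) ∧
      (x i < x j + 1 → y i < y j + 1)) : SameRg x y := by
  intro i j
  refine ⟨⟨(h i j).1, fun hy => ?_⟩, ⟨(h i j).2.1, fun hy => ?_⟩, ⟨(h i j).2.2, fun hy => ?_⟩⟩
  · by_contra hc
    rcases eq_or_ne i j with rfl | hij
    · exact absurd hy (lt_irrefl _)
    · have : x j < x i := lt_of_le_of_ne (not_lt.1 hc) (Ne.symm (U_ne hx hij).1)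
      exact absurd ((h j i).1 this) (by intro hc2; linarith)
  · by_contra hc
    rcases eq_or_ne i j with rfl | hij
    · linarith
    · have : x j < x i + 1 := lt_of_le_of_ne (not_lt.1 hc) (Ne.symm (U_ne hx hij).2)
      exact absurd ((h j i).2.2 this) (by intro hc2; linarith)
  · by_contra hc
    rcases eq_or_ne i j with rfl | hij
    · exact hc (by linarith)
    · have : x j + 1 < x i := lt_of_le_of_ne (not_lt.1 hc) ((U_ne hx hij.symm).2)
      exact absurd ((h j i).2.1 this) (by intro hc2; linarith)

/-- the region of a point -/
def Rg {n : ℕ} (x : Fin n → ℝ) : Set (Fin n → ℝ) := {y | SameRg x y}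

lemma mem_Rg_self {n : ℕ} (x : Fin n → ℝ) : x ∈ Rg x := rel_refl x

lemma Rg_subset_U {n : ℕ} {x : Fin n → ℝ} (hx : x ∈ UU n) : Rg x ⊆ UU n := by
  intro y hy i j hij s hs
  have hij' : i ≠ j := ne_of_lt hij
  intro heq
  simp only [Set.mem_insert_iff, Set.mem_singleton_iff] at hs
  rcases hs with rfl | rfl | rfl
  · -- s = -1, i.e. y i + 1 = y j
    have hyeq : y i + 1 = y j := by linarith
    have h1 : ¬ (x i + 1 < x j) := fun h => by have := (hy i j).2.1.1 h; linarith
    have h2 : x j < x i + 1 := lt_of_le_of_ne (not_lt.1 h1) (Ne.symm (U_ne hx hij').2)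
    have h3 := (hy j i).2.2.1 h2
    linarith
  · -- s = 0
    have hyeq : y i = y j := by linarith
    have hx1 : ¬ x i < x j := fun h => absurd ((hy i j).1.1 h) (by rw [hyeq]; exact lt_irrefl _)
    have hx2 : ¬ x j < x i := fun h => absurd ((hy j i).1.1 h) (by rw [hyeq]; exact lt_irrefl _)
    exact (U_ne hx hij').1 (le_antisymm (not_lt.1 hx2) (not_lt.1 hx1))
  · -- s = 1, i.e. y i = y j + 1
    have hyeq : y i = y j + 1 := by linarith
    have h1 : ¬ (x j + 1 < x i) := fun h => by have := (hy j i).2.1.1 h; linarith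
    have h2 : x i < x j + 1 := lt_of_le_of_ne (not_lt.1 h1) (Ne.symm (U_ne hx hij'.symm).2)
    have h3 := (hy i j).2.2.1 h2
    linarith

lemma Rg_eq_imp {n : ℕ} {x : Fin n → ℝ} (hx : x ∈ UU n) :
    Rg x = {y | ∀ i j : Fin n, (x i < x j → y i < y j) ∧ (x i + 1 < x j → y i + 1 < y j) ∧
      (x i < x j + 1 → y i < y j + 1)} := by
  ext y
  constructor
  · intro hy i j
    exact ⟨(hy i j).1.1, (hy i j).2.1.1, (hy i j).2.2.1⟩
  · intro hy
    exact rel_of_imp hx hy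

lemma isOpen_Rg {n : ℕ} {x : Fin n → ℝ} (hx : x ∈ UU n) : IsOpen (Rg x) := by
  rw [Rg_eq_imp hx]
  have : {y : Fin n → ℝ | ∀ i j : Fin n, (x i < x j → y i < y j) ∧
      (x i + 1 < x j → y i + 1 < y j) ∧ (x i < x j + 1 → y i < y j + 1)} =
      ⋂ i, ⋂ j, ({y : Fin n → ℝ | x i < x j → y i < y j} ∩
        {y | x i + 1 < x j → y i + 1 < y j} ∩ {y | x i < x j + 1 → y i < y j + 1}) := by
    ext y
    simp only [Set.mem_iInter, Set.mem_inter_iff, Set.mem_setOf_eq]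
    refine ⟨fun h i j => ?_, fun h i j => ?_⟩ <;> have := h i j <;> tauto
  rw [this]
  refine isOpen_iInter_of_finite fun i => isOpen_iInter_of_finite fun j => ?_
  have h1 : Continuous fun y : Fin n → ℝ => y i := continuous_apply i
  have h2 : Continuous fun y : Fin n → ℝ => y j := continuous_apply j
  refine IsOpen.inter (IsOpen.inter ?_ ?_) ?_
  · by_cases h : x i < x j
    · simp only [h, forall_true_left]
      exact isOpen_lt h1 h2
    · simp only [h, false_implies]
      rw [Set.setOf_true]
      exact isOpen_univ
  · by_cases h : x i + 1 < x j
    · simp only [h, forall_true_left]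
      exact isOpen_lt (h1.add continuous_const) h2
    · simp only [h, false_implies]
      rw [Set.setOf_true]
      exact isOpen_univ
  · by_cases h : x i < x j + 1
    · simp only [h, forall_true_left]
      exact isOpen_lt h1 (h2.add continuous_const)
    · simp only [h, false_implies]
      rw [Set.setOf_true]
      exact isOpen_univ

lemma combo_lt {p q r s a b : ℝ} (h1 : p < q) (h2 : r < s) (ha : 0 ≤ a) (hb : 0 ≤ b)
    (hab : a + b = 1) : a * p + b * r < a * q + b * s := by
  rcases eq_or_lt_of_le ha with h | h
  · have hb1 : b = 1 := by linarith
    rw [← h, hb1]; simpa using h2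
  · have e1 := mul_lt_mul_of_pos_left h1 h
    have e2 := mul_le_mul_of_nonneg_left (le_of_lt h2) hb
    linarith

lemma convex_Rg {n : ℕ} {x : Fin n → ℝ} (hx : x ∈ UU n) : Convex ℝ (Rg x) := by
  rw [Rg_eq_imp hx]
  intro y hy z hz a b ha hb hab
  intro i j
  simp only [Pi.add_apply, Pi.smul_apply, smul_eq_mul]
  refine ⟨fun h => ?_, fun h => ?_, fun h => ?_⟩
  · exact combo_lt ((hy i j).1 h) ((hz i j).1 h) ha hb hab
  · have := combo_lt ((hy i j).2.1 h) ((hz i j).2.1 h) ha hb hab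
    nlinarith [this]
  · have := combo_lt ((hy i j).2.2 h) ((hz i j).2.2 h) ha hb hab
    nlinarith [this]

lemma Rg_eq_of_rel {n : ℕ} {x y : Fin n → ℝ} (h : SameRg x y) : Rg x = Rg y := by
  ext z
  exact ⟨fun hz => rel_trans (rel_symm h) hz, fun hz => rel_trans h hz⟩

lemma cc_eq_Rg {n : ℕ} {x : Fin n → ℝ} (hx : x ∈ UU n) :
    connectedComponentIn (UU n) x = Rg x := by
  apply Set.Subset.antisymm
  · set A := Rg x with hA
    set B := ⋃ y ∈ UU n \ Rg x, Rg y with hB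
    have hAopen : IsOpen A := isOpen_Rg hx
    have hBopen : IsOpen B := isOpen_biUnion fun y hy => isOpen_Rg hy.1
    have hCU : connectedComponentIn (UU n) x ⊆ UU n := connectedComponentIn_subset _ _
    have hcov : connectedComponentIn (UU n) x ⊆ A ∪ B := by
      intro z hz
      by_cases h : z ∈ Rg x
      · exact Or.inl h
      · exact Or.inr (Set.mem_biUnion ⟨hCU hz, h⟩ (mem_Rg_self z))
    intro w hw
    by_contra hwA
    have hwB : w ∈ B := (hcov hw).resolve_left hwA
    have hxA : x ∈ connectedComponentIn (UU n) x ∩ A :=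
      ⟨mem_connectedComponentIn hx, mem_Rg_self x⟩
    obtain ⟨v, hvC, hvA, hvB⟩ := isPreconnected_connectedComponentIn A B hAopen hBopen hcov
      ⟨x, hxA⟩ ⟨w, hw, hwB⟩
    obtain ⟨y, hy, hvy⟩ := Set.mem_iUnion₂.1 hvB
    exact hy.2 (rel_trans hvA (rel_symm hvy))
  · exact ((convex_Rg hx).isPreconnected).subset_connectedComponentIn (mem_Rg_self x)
      (Rg_subset_U hx)

/-! ### rank invariants -/

/-- number of coordinates less than `x i` -/
noncomputable def rk {n : ℕ} (x : Fin n → ℝ) (i : Fin n) : ℕ :=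
  (univ.filter fun j => x j < x i).card

/-- number of coordinates less than `x i + 1` -/
noncomputable def dk {n : ℕ} (x : Fin n → ℝ) (i : Fin n) : ℕ :=
  (univ.filter fun j => x j < x i + 1).card

lemma rk_lt_rk {n : ℕ} {x : Fin n → ℝ} {i j : Fin n} (h : x i < x j) : rk x i < rk x j := by
  apply Finset.card_lt_card
  rw [Finset.ssubset_def]
  constructor
  · intro k hk
    rw [Finset.mem_filter] at hk ⊢
    exact ⟨hk.1, lt_trans hk.2 h⟩
  · intro hc
    have := hc (Finset.mem_filter.2 ⟨mem_univ i, h⟩)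
    rw [Finset.mem_filter] at this
    exact absurd this.2 (lt_irrefl _)

lemma dk_le_rk {n : ℕ} {x : Fin n → ℝ} {i j : Fin n} (h : x i + 1 ≤ x j) : dk x i ≤ rk x j := by
  apply Finset.card_le_card
  intro k hk
  rw [Finset.mem_filter] at hk ⊢
  exact ⟨hk.1, lt_of_lt_of_le hk.2 h⟩

lemma rk_lt_dk {n : ℕ} {x : Fin n → ℝ} {i j : Fin n} (h : x i < x j + 1) : rk x i < dk x j := by
  apply Finset.card_lt_card
  rw [Finset.ssubset_def]
  constructor
  · intro k hk
    rw [Finset.mem_filter] at hk ⊢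
    exact ⟨hk.1, lt_trans hk.2 h⟩
  · intro hc
    have := hc (Finset.mem_filter.2 ⟨mem_univ i, h⟩)
    rw [Finset.mem_filter] at this
    exact absurd this.2 (lt_irrefl _)

lemma rk_self_lt_dk {n : ℕ} (x : Fin n → ℝ) (i : Fin n) : rk x i < dk x i :=
  rk_lt_dk (by linarith)

lemma rk_lt_iff {n : ℕ} {x : Fin n → ℝ} (hx : x ∈ UU n) {i j : Fin n} :
    x i < x j ↔ rk x i < rk x j := by
  refine ⟨rk_lt_rk, fun h => ?_⟩
  by_contra hc
  rcases eq_or_ne i j with rfl | hij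
  · exact absurd h (lt_irrefl _)
  · have : x j < x i := lt_of_le_of_ne (not_lt.1 hc) (Ne.symm (U_ne hx hij).1)
    exact absurd (rk_lt_rk this) (by omega)

lemma dk_le_iff {n : ℕ} {x : Fin n → ℝ} (hx : x ∈ UU n) {i j : Fin n} :
    x i + 1 < x j ↔ dk x i ≤ rk x j := by
  refine ⟨fun h => dk_le_rk (le_of_lt h), fun h => ?_⟩
  by_contra hc
  rcases eq_or_ne i j with rfl | hij
  · exact absurd h (by have := rk_self_lt_dk x i; omega)
  · have : x j < x i + 1 := lt_of_le_of_ne (not_lt.1 hc) (Ne.symm (U_ne hx hij).2)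
    exact absurd (rk_lt_dk this) (by omega)

lemma rk_lt_dk_iff {n : ℕ} {x : Fin n → ℝ} (hx : x ∈ UU n) {i j : Fin n} :
    x i < x j + 1 ↔ rk x i < dk x j := by
  refine ⟨rk_lt_dk, fun h => ?_⟩
  by_contra hc
  rcases eq_or_ne i j with rfl | hij
  · exact hc (by linarith)
  · have : x j + 1 < x i := lt_of_le_of_ne (not_lt.1 hc) ((U_ne hx hij.symm).2)
    exact absurd (dk_le_rk (le_of_lt this)) (by omega)

lemma rel_iff_rkdk {n : ℕ} {x x' : Fin n → ℝ} (hx : x ∈ UU n) (hx' : x' ∈ UU n) :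
    SameRg x x' ↔ (rk x = rk x' ∧ dk x = dk x') := by
  constructor
  · intro h
    constructor
    · funext i
      unfold rk
      congr 1
      apply Finset.filter_congr
      intro j _
      exact (h j i).1
    · funext i
      unfold dk
      congr 1
      apply Finset.filter_congr
      intro j _
      exact (h j i).2.2
  · intro ⟨h1, h2⟩ i j
    refine ⟨?_, ?_, ?_⟩
    · rw [rk_lt_iff hx, rk_lt_iff hx', h1]
    · rw [dk_le_iff hx, dk_le_iff hx', h1, h2]
    · rw [rk_lt_dk_iff hx, rk_lt_dk_iff hx', h1, h2]

/-! ### the canonical point of a region -/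

lemma Y_lt_iff {n : ℕ} {f : Fin n → Fin n} (hf : f ∈ AF n) (a b : ℕ) :
    Y f a < Y f b ↔ a < b := by
  rcases lt_trichotomy a b with h | rfl | h
  · simp [h, (Y_spec hf b a h).1]
  · simp
  · have := (Y_spec hf a b h).1
    constructor <;> intro h2 <;> [linarith; omega]

lemma Y_lt_one_iff {n : ℕ} {f : Fin n → Fin n} (hf : f ∈ AF n) (a b : ℕ) :
    Y f b < Y f a + 1 ↔ b ≤ fh f a := by
  rcases le_or_gt b a with h | h
  · have h2 : Y f b ≤ Y f a := by
      rcases eq_or_lt_of_le h with rfl | h3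
      · exact le_refl _
      · exact le_of_lt ((Y_spec hf a b h3).1)
    have h4 : b ≤ fh f a := le_trans h (fh_ge hf a)
    exact ⟨fun _ => h4, fun _ => by linarith⟩
  · obtain ⟨_, h1, h2⟩ := Y_spec hf b a h
    constructor
    · intro h3
      by_contra hc
      push_neg at hc
      exact absurd (h2 hc) (by linarith)
    · exact h1

lemma Y_ne_add_one {n : ℕ} {f : Fin n → Fin n} (hf : f ∈ AF n) (a b : ℕ) :
    Y f b ≠ Y f a + 1 := by
  rcases le_or_gt b a with h | h
  · have h2 : Y f b ≤ Y f a := by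
      rcases eq_or_lt_of_le h with rfl | h3
      · exact le_refl _
      · exact le_of_lt ((Y_spec hf a b h3).1)
    intro hc; linarith
  · obtain ⟨_, h1, h2⟩ := Y_spec hf b a h
    intro hc
    rcases le_or_gt b (fh f a) with h3 | h3
    · exact absurd (h1 h3) (by linarith)
    · exact absurd (h2 h3) (by linarith)

/-- the canonical point attached to a permutation and an `AF` function -/
noncomputable def pt {n : ℕ} (ρ : Equiv.Perm (Fin n)) (f : Fin n → Fin n) : Fin n → ℝ :=
  fun i => Y f (ρ i)

lemma pt_mem_U {n : ℕ} (ρ : Equiv.Perm (Fin n)) {f : Fin n → Fin n} (hf : f ∈ AF n) :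
    pt ρ f ∈ UU n := by
  intro i j hij s hs heq
  have hij' : ρ i ≠ ρ j := fun hc => absurd (ρ.injective hc) (ne_of_lt hij)
  have hab : ((ρ i : ℕ)) ≠ (ρ j : ℕ) := fun hc => hij' (Fin.ext hc)
  simp only [Set.mem_insert_iff, Set.mem_singleton_iff] at hs
  unfold pt at heq
  rcases hs with rfl | rfl | rfl
  · exact Y_ne_add_one hf (ρ i) (ρ j) (by linarith)
  · have : Y f (ρ i) ≠ Y f (ρ j) := by
      rcases lt_or_gt_of_ne hab with h | h
      · exact ne_of_lt ((Y_lt_iff hf _ _).2 h)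
      · exact (ne_of_lt ((Y_lt_iff hf _ _).2 h)).symm
    exact this (by linarith)
  · exact Y_ne_add_one hf (ρ j) (ρ i) (by linarith)

lemma card_filter_perm {n : ℕ} (ρ : Equiv.Perm (Fin n)) (p : Fin n → Prop) [DecidablePred p] :
    (univ.filter fun j => p (ρ j)).card = (univ.filter p).card := by
  apply Finset.card_bij (fun j _ => ρ j)
  · intro a ha; simp at ha ⊢; exact ha
  · intro a _ b _ h; exact ρ.injective h
  · intro b hb; exact ⟨ρ.symm b, by simp at hb ⊢; simpa using hb, by simp⟩

lemma cflt {n : ℕ} (c : Fin n) :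
    (univ.filter fun b : Fin n => b < c).card = (c : ℕ) := by
  rw [show (univ.filter fun b : Fin n => b < c) = Finset.Iio c from by ext b; simp]
  exact Fin.card_Iio c

lemma cfle {n : ℕ} (c : Fin n) :
    (univ.filter fun b : Fin n => b ≤ c).card = (c : ℕ) + 1 := by
  rw [show (univ.filter fun b : Fin n => b ≤ c) = Finset.Iic c from by ext b; simp]
  exact Fin.card_Iic c

lemma rk_pt {n : ℕ} (ρ : Equiv.Perm (Fin n)) {f : Fin n → Fin n} (hf : f ∈ AF n) (i : Fin n) :
    rk (pt ρ f) i = (ρ i : ℕ) := by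
  unfold rk pt
  have h1 : (univ.filter fun j => Y f (ρ j) < Y f (ρ i)) = univ.filter fun j => ρ j < ρ i := by
    apply Finset.filter_congr
    intro j _
    rw [Y_lt_iff hf]
    exact Iff.rfl
  rw [h1, card_filter_perm ρ (fun b => b < ρ i), cflt]

lemma dk_pt {n : ℕ} (ρ : Equiv.Perm (Fin n)) {f : Fin n → Fin n} (hf : f ∈ AF n) (i : Fin n) :
    dk (pt ρ f) i = (f (ρ i) : ℕ) + 1 := by
  unfold dk pt
  have hfh : fh f (ρ i) = (f (ρ i) : ℕ) := by
    rw [fh_eq f (ρ i).isLt]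
  have h1 : (univ.filter fun j => Y f (ρ j) < Y f (ρ i) + 1) =
      univ.filter fun j => ρ j ≤ f (ρ i) := by
    apply Finset.filter_congr
    intro j _
    rw [Y_lt_one_iff hf, hfh]
    exact Iff.rfl
  rw [h1, card_filter_perm ρ (fun b => b ≤ f (ρ i)), cfle]

/-! ### recovering the parameters from a point -/

section recover

variable {n : ℕ} {x : Fin n → ℝ}

lemma rk_lt_n (i : Fin n) : rk x i < n := by
  have h : (univ.filter fun j => x j < x i) ⊂ univ := by
    rw [Finset.ssubset_def]
    refine ⟨Finset.subset_univ _, fun hc => ?_⟩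
    have := hc (mem_univ i)
    rw [Finset.mem_filter] at this
    exact absurd this.2 (lt_irrefl _)
  have := Finset.card_lt_card h
  simpa [rk] using this

lemma dk_le_n (i : Fin n) : dk x i ≤ n := by
  have := Finset.card_le_card (Finset.subset_univ (univ.filter fun j => x j < x i + 1))
  simpa [dk] using this

/-- the rank permutation of a point -/
noncomputable def rkP (hx : x ∈ UU n) : Equiv.Perm (Fin n) :=
  Equiv.ofBijective (fun i => (⟨rk x i, rk_lt_n i⟩ : Fin n))
    (Finite.injective_iff_bijective.1 (by
      intro i j hij
      by_contra hc
      have h1 : x i ≠ x j := (U_ne hx hc).1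
      rcases lt_or_gt_of_ne h1 with h | h
      · have := rk_lt_rk h
        rw [Fin.mk.injEq] at hij
        omega
      · have := rk_lt_rk h
        rw [Fin.mk.injEq] at hij
        omega))

lemma rkP_apply (hx : x ∈ UU n) (i : Fin n) : ((rkP hx) i : ℕ) = rk x i := rfl

/-- the gap function of a point -/
noncomputable def dkF (hx : x ∈ UU n) : Fin n → Fin n :=
  fun k => ⟨dk x ((rkP hx).symm k) - 1, by
    have h1 := rk_self_lt_dk x ((rkP hx).symm k)
    have h2 := dk_le_n (x := x) ((rkP hx).symm k)
    have h3 := k.pos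
    omega⟩

lemma rk_symm_apply (hx : x ∈ UU n) (k : Fin n) : rk x ((rkP hx).symm k) = (k : ℕ) := by
  conv_rhs => rw [← Equiv.apply_symm_apply (rkP hx) k]
  rw [rkP_apply]

lemma dkF_mem (hx : x ∈ UU n) : dkF hx ∈ AF n := by
  rw [mem_AF]
  constructor
  · intro k k' hkk'
    have hxle : x ((rkP hx).symm k) ≤ x ((rkP hx).symm k') := by
      by_contra hc
      push_neg at hc
      have := rk_lt_rk hc
      rw [rk_symm_apply, rk_symm_apply] at this
      omega
    have hdk : dk x ((rkP hx).symm k) ≤ dk x ((rkP hx).symm k') := by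
      apply Finset.card_le_card
      intro m hm
      rw [Finset.mem_filter] at hm ⊢
      exact ⟨hm.1, by linarith [hm.2]⟩
    simp only [dkF]
    have h1 := rk_self_lt_dk x ((rkP hx).symm k)
    omega
  · intro k
    simp only [dkF]
    have h1 := rk_self_lt_dk x ((rkP hx).symm k)
    rw [rk_symm_apply] at h1
    omega

lemma rel_pt (hx : x ∈ UU n) : SameRg (pt (rkP hx) (dkF hx)) x := by
  rw [rel_iff_rkdk (pt_mem_U _ (dkF_mem hx)) hx]
  constructor
  · funext i
    rw [rk_pt _ (dkF_mem hx), rkP_apply]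
  · funext i
    rw [dk_pt _ (dkF_mem hx)]
    show (dkF hx ((rkP hx) i) : ℕ) + 1 = dk x i
    simp only [dkF]
    rw [Equiv.symm_apply_apply]
    have h1 := rk_self_lt_dk x i
    omega

end recover

theorem catalan_arrangement_regions' (n : ℕ) :
    {C : Set (Fin n → ℝ) | ∃ x ∈ UU n, C = connectedComponentIn (UU n) x}.ncard =
      Nat.factorial n * catalan n := by
  classical
  set Θ : Equiv.Perm (Fin n) × {f : Fin n → Fin n // f ∈ AF n} → Set (Fin n → ℝ) :=
    fun ω => connectedComponentIn (UU n) (pt ω.1 ω.2.1) with hΘ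
  have hrange : Set.range Θ = {C : Set (Fin n → ℝ) | ∃ x ∈ UU n, C = connectedComponentIn (UU n) x} := by
    ext C
    constructor
    · rintro ⟨ω, rfl⟩
      exact ⟨pt ω.1 ω.2.1, pt_mem_U _ ω.2.2, rfl⟩
    · rintro ⟨x, hx, rfl⟩
      refine ⟨((rkP hx), ⟨dkF hx, dkF_mem hx⟩), ?_⟩
      show connectedComponentIn (UU n) (pt (rkP hx) (dkF hx)) = connectedComponentIn (UU n) x
      rw [cc_eq_Rg (pt_mem_U _ (dkF_mem hx)), cc_eq_Rg hx]
      exact Rg_eq_of_rel (rel_pt hx)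
  have hinj : Function.Injective Θ := by
    intro ω ω' h
    have h1 : pt ω'.1 ω'.2.1 ∈ Rg (pt ω.1 ω.2.1) := by
      rw [← cc_eq_Rg (pt_mem_U _ ω.2.2)]
      have h' : connectedComponentIn (UU n) (pt ω.1 ω.2.1) =
          connectedComponentIn (UU n) (pt ω'.1 ω'.2.1) := h
      rw [h']
      exact mem_connectedComponentIn (pt_mem_U _ ω'.2.2)
    have h2 : SameRg (pt ω.1 ω.2.1) (pt ω'.1 ω'.2.1) := h1
    rw [rel_iff_rkdk (pt_mem_U _ ω.2.2) (pt_mem_U _ ω'.2.2)] at h2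
    obtain ⟨hrk, hdk⟩ := h2
    have hρ : ω.1 = ω'.1 := by
      apply Equiv.ext
      intro i
      apply Fin.ext
      have := congrFun hrk i
      rwa [rk_pt _ ω.2.2, rk_pt _ ω'.2.2] at this
    have hf : ω.2 = ω'.2 := by
      apply Subtype.ext
      funext a
      apply Fin.ext
      have := congrFun hdk (ω.1.symm a)
      rw [dk_pt _ ω.2.2, dk_pt _ ω'.2.2, ← hρ, Equiv.apply_symm_apply] at this
      omega
    exact Prod.ext hρ hf
  rw [← hrange, ← Set.image_univ, Set.ncard_image_of_injective _ hinj, Set.ncard_univ,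
    Nat.card_eq_fintype_card, Fintype.card_prod, Fintype.card_perm, Fintype.card_fin]
  congr 1
  rw [← card_AF n, ← Fintype.card_coe (AF n)]

/-- The Catalan arrangement in `ℝⁿ`, with hyperplanes `{x : x_i - x_j = s}` for
`1 ≤ i < j ≤ n` and `s ∈ {-1, 0, 1}`, has exactly `n! · C_n` regions, where
`C_n = C(2n, n)/(n+1)` is the `n`-th Catalan number. -/
theorem catalan_arrangement_regions (n : ℕ) :
    {C : Set (Fin n → ℝ) |
        ∃ x ∈ {x : Fin n → ℝ | ∀ i j : Fin n, i < j →
                  ∀ s ∈ ({-1, 0, 1} : Set ℝ), x i - x j ≠ s},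
          C = connectedComponentIn
                {x : Fin n → ℝ | ∀ i j : Fin n, i < j →
                  ∀ s ∈ ({-1, 0, 1} : Set ℝ), x i - x j ≠ s} x}.ncard =
      Nat.factorial n * ((2 * n).choose n / (n + 1)) := by
  have h1 : (2 * n).choose n / (n + 1) = catalan n := by
    rw [← Nat.centralBinom_eq_two_mul_choose, ← catalan_eq_centralBinom_div]
  rw [h1]
  exact catalan_arrangement_regions' n
end
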